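/- arXiv:1805.08181 — 9 statements merged into one kernel-verified Lean document; each statement's English description precedes it below -/
import Mathlib

section
/- Let K be a field and let d, n be positive integers. Let M₁, …, M_m be d×n matrices over K, each of rank d, and let a₁, …, a_m be integers. Then the function ∑_{j=1}^m aⱼ·1_{P_{Mⱼ}} : ℝⁿ → ℤ is identically zero if and only if the function ∑_{j=1}^m aⱼ·1_{I_{Mⱼ}} : ℝⁿ → ℤ is identically zero, where 1_S denotes the indicator function of a subset S ⊆ ℝⁿ. -/
noncomputable section

/-- The rank of the submatrix of `M` formed by the columns indexed by `A`. -/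
def colRank {K : Type*} [Field K] {d n : ℕ} (M : Matrix (Fin d) (Fin n) K)
    (A : Finset (Fin n)) : ℕ :=
  (M.submatrix id ((↑) : A → Fin n)).rank

/-- The rank polytope `P_M ⊆ ℝⁿ` of a `d × n` matrix `M`. -/
def rankPolytope {K : Type*} [Field K] {d n : ℕ} (M : Matrix (Fin d) (Fin n) K) :
    Set (Fin n → ℝ) :=
  {x | (∀ i, 0 ≤ x i ∧ x i ≤ 1) ∧ (∑ i, x i = d) ∧
    ∀ A : Finset (Fin n), ∑ i ∈ A, x i ≤ colRank M A}

/-- The independence polytope `I_M ⊆ ℝⁿ` of a `d × n` matrix `M`. -/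
def indepPolytope {K : Type*} [Field K] {d n : ℕ} (M : Matrix (Fin d) (Fin n) K) :
    Set (Fin n → ℝ) :=
  {x | (∀ i, 0 ≤ x i) ∧ ∀ A : Finset (Fin n), ∑ i ∈ A, x i ≤ colRank M A}

open scoped Classical
open Matrix

section RankLemmas

variable {K : Type*} [Field K] {d n : ℕ} (M : Matrix (Fin d) (Fin n) K)

lemma range_sub_eq (A : Finset (Fin n)) :
    Set.range (M.submatrix id ((↑) : A → Fin n))ᵀ = Mᵀ '' (A : Set (Fin n)) := by
  ext v
  constructor
  · rintro ⟨a, rfl⟩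
    exact ⟨(a : Fin n), a.2, rfl⟩
  · rintro ⟨i, hi, rfl⟩
    exact ⟨⟨i, hi⟩, rfl⟩

lemma colRank_eq_span (A : Finset (Fin n)) :
    colRank M A = Module.finrank K (Submodule.span K (Mᵀ '' (A : Set (Fin n)))) := by
  rw [colRank, Matrix.rank_eq_finrank_span_cols]
  exact congrArg (fun s => Module.finrank K (Submodule.span K s)) (range_sub_eq M A)

lemma colRank_univ : colRank M Finset.univ = M.rank := by
  rw [colRank_eq_span, Matrix.rank_eq_finrank_span_cols, Finset.coe_univ]
  exact congrArg (fun s => Module.finrank K (Submodule.span K s))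
    (Set.image_univ (f := (Mᵀ : Fin n → Fin d → K)))

lemma colRank_singleton_le (i : Fin n) : colRank M {i} ≤ 1 := by
  have := Matrix.rank_le_card_width (M.submatrix id ((↑) : ({i} : Finset (Fin n)) → Fin n))
  simpa [colRank] using this

lemma colRank_empty : colRank M ∅ = 0 := by
  have := Matrix.rank_le_card_width (M.submatrix id ((↑) : (∅ : Finset (Fin n)) → Fin n))
  simpa [colRank] using this

lemma colRank_submodular (A B : Finset (Fin n)) :
    colRank M (A ∪ B) + colRank M (A ∩ B) ≤ colRank M A + colRank M B := by
  rw [colRank_eq_span, colRank_eq_span, colRank_eq_span, colRank_eq_span]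
  have hsup : Submodule.span K (Mᵀ '' ((A ∪ B : Finset (Fin n)) : Set (Fin n))) =
      Submodule.span K (Mᵀ '' (A : Set (Fin n))) ⊔ Submodule.span K (Mᵀ '' (B : Set (Fin n))) := by
    rw [Finset.coe_union, ← Submodule.span_union]
    exact congrArg (Submodule.span K) (Set.image_union (Mᵀ : Fin n → Fin d → K) _ _)
  have hinf : Submodule.span K (Mᵀ '' ((A ∩ B : Finset (Fin n)) : Set (Fin n))) ≤
      Submodule.span K (Mᵀ '' (A : Set (Fin n))) ⊓ Submodule.span K (Mᵀ '' (B : Set (Fin n))) := by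
    apply Submodule.span_le.2
    rintro v ⟨i, hi, rfl⟩
    rw [Finset.coe_inter] at hi
    exact ⟨Submodule.subset_span ⟨i, hi.1, rfl⟩, Submodule.subset_span ⟨i, hi.2, rfl⟩⟩
  have key := Submodule.finrank_sup_add_finrank_inf_eq
      (Submodule.span K (Mᵀ '' (A : Set (Fin n)))) (Submodule.span K (Mᵀ '' (B : Set (Fin n))))
  have hmono := Submodule.finrank_mono hinf
  rw [hsup]
  omega

end RankLemmas

section Euler

lemma euler_dim1 {m : ℕ} (a : Fin m → ℤ) (S : Fin m → Set ℝ)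
    (hc : ∀ j, IsCompact (S j)) (hv : ∀ j, Convex ℝ (S j))
    (h : ∀ t : ℝ, ∑ j, a j * (S j).indicator (fun _ => (1:ℤ)) t = 0) :
    ∑ j, a j * (if (S j).Nonempty then (1:ℤ) else 0) = 0 := by
  have memiff : ∀ j, (S j).Nonempty → ∀ t : ℝ,
      (t ∈ S j ↔ sInf (S j) ≤ t ∧ t ≤ sSup (S j)) := by
    intro j hne t
    constructor
    · intro ht
      exact ⟨csInf_le (hc j).bddBelow ht, le_csSup (hc j).bddAbove ht⟩
    · rintro ⟨h1, h2⟩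
      exact (hv j).ordConnected.out ((hc j).sInf_mem hne) ((hc j).sSup_mem hne) ⟨h1, h2⟩
  set F : Finset (Fin m) := Finset.univ.filter (fun j => (S j).Nonempty) with hF
  have lhs_eq : ∑ j, a j * (if (S j).Nonempty then (1:ℤ) else 0) = ∑ j ∈ F, a j := by
    rw [hF, Finset.sum_filter]
    apply Finset.sum_congr rfl
    intro j _
    by_cases hj : (S j).Nonempty <;> simp [hj]
  rw [lhs_eq]
  set T : Finset ℝ := F.image (fun j => sSup (S j)) with hT
  rw [← Finset.sum_fiberwise_of_maps_to (g := fun j => sSup (S j)) (t := T)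
      (fun j hj => Finset.mem_image_of_mem _ hj) (fun j => a j)]
  apply Finset.sum_eq_zero
  intro t _
  set E : Finset ℝ := F.image (fun j => sInf (S j)) ∪ F.image (fun j => sSup (S j)) with hE
  set E' : Finset ℝ := E.filter (fun e => t < e) with hE'
  set ε : ℝ := if hne : E'.Nonempty then (E'.min' hne - t)/2 else 1 with heps
  have hε : 0 < ε := by
    rw [heps]
    split
    · rename_i hne
      have := (Finset.mem_filter.1 (E'.min'_mem hne)).2
      linarith
    · norm_num
  have hεlt : ∀ e ∈ E, t < e → t + ε < e := by
    intro e he hte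
    have hne : E'.Nonempty := ⟨e, Finset.mem_filter.2 ⟨he, hte⟩⟩
    have hmin : E'.min' hne ≤ e := Finset.min'_le _ _ (Finset.mem_filter.2 ⟨he, hte⟩)
    have h2 := (Finset.mem_filter.1 (E'.min'_mem hne)).2
    rw [heps]
    rw [dif_pos hne]
    linarith
  have key : ∀ j, (S j).indicator (fun _ => (1:ℤ)) t - (S j).indicator (fun _ => (1:ℤ)) (t+ε)
      = if j ∈ F.filter (fun j => sSup (S j) = t) then 1 else 0 := by
    intro j
    by_cases hne : (S j).Nonempty
    · have hjF : j ∈ F := by rw [hF]; exact Finset.mem_filter.2 ⟨Finset.mem_univ _, hne⟩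
      have hinfE : sInf (S j) ∈ E := Finset.mem_union_left _ (Finset.mem_image_of_mem _ hjF)
      have hsupE : sSup (S j) ∈ E := Finset.mem_union_right _ (Finset.mem_image_of_mem _ hjF)
      have hls : sInf (S j) ≤ sSup (S j) := by
        obtain ⟨z, hz⟩ := hne
        exact le_trans (csInf_le (hc j).bddBelow hz) (le_csSup (hc j).bddAbove hz)
      by_cases hsup : sSup (S j) = t
      · have ht : t ∈ S j := (memiff j hne t).2 ⟨hsup ▸ hls, hsup.ge⟩
        have ht' : t + ε ∉ S j := by
          intro hmem
          have := ((memiff j hne _).1 hmem).2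
          rw [hsup] at this
          linarith
        rw [Set.indicator_of_mem ht, Set.indicator_of_notMem ht',
          if_pos (Finset.mem_filter.2 ⟨hjF, hsup⟩)]
        norm_num
      · rw [if_neg (show j ∉ F.filter (fun j => sSup (S j) = t) from
          fun hmem => hsup (Finset.mem_filter.1 hmem).2)]
        rcases lt_or_gt_of_ne hsup with hlt | hgt
        · have h1 : t ∉ S j := fun hm => absurd ((memiff j hne t).1 hm).2 (by linarith)
          have h2 : t + ε ∉ S j := fun hm => absurd ((memiff j hne _).1 hm).2 (by linarith)
          rw [Set.indicator_of_notMem h1, Set.indicator_of_notMem h2, sub_self]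
        · have hsup2 : t + ε < sSup (S j) := hεlt _ hsupE hgt
          by_cases hinf : sInf (S j) ≤ t
          · have h1 : t ∈ S j := (memiff j hne t).2 ⟨hinf, hgt.le⟩
            have h2 : t + ε ∈ S j := (memiff j hne _).2 ⟨by linarith, hsup2.le⟩
            rw [Set.indicator_of_mem h1, Set.indicator_of_mem h2, sub_self]
          · push_neg at hinf
            have hinf2 : t + ε < sInf (S j) := hεlt _ hinfE hinf
            have h1 : t ∉ S j := fun hm => absurd ((memiff j hne t).1 hm).1 (by linarith)
            have h2 : t + ε ∉ S j := fun hm => absurd ((memiff j hne _).1 hm).1 (by linarith)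
            rw [Set.indicator_of_notMem h1, Set.indicator_of_notMem h2, sub_self]
    · have h0 : ∀ r : ℝ, (S j).indicator (fun _ => (1:ℤ)) r = 0 := by
        intro r
        apply Set.indicator_of_notMem
        exact fun hm => hne ⟨r, hm⟩
      have hjF : j ∉ F := by rw [hF]; simp [hne]
      rw [h0, h0, if_neg (show j ∉ F.filter (fun j => sSup (S j) = t) from
        fun hmem => hjF (Finset.mem_filter.1 hmem).1), sub_self]
  have step : ∑ j ∈ F.filter (fun j => sSup (S j) = t), a j
      = ∑ j, a j * ((S j).indicator (fun _ => (1:ℤ)) t - (S j).indicator (fun _ => (1:ℤ)) (t+ε)) := by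
    simp only [key, mul_ite, mul_one, mul_zero]
    rw [Finset.sum_ite_mem]
    simp
  rw [step]
  simp only [mul_sub]
  rw [Finset.sum_sub_distrib, h t, h (t+ε), sub_self]

lemma euler_nonempty : ∀ (k : ℕ) {m : ℕ} (a : Fin m → ℤ) (Q : Fin m → Set (Fin k → ℝ)),
    (∀ j, IsCompact (Q j)) → (∀ j, Convex ℝ (Q j)) →
    (∀ x, ∑ j, a j * (Q j).indicator (fun _ => (1:ℤ)) x = 0) →
    ∑ j, a j * (if (Q j).Nonempty then (1:ℤ) else 0) = 0 := by
  intro k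
  induction k with
  | zero =>
    intro m a Q hc hv h
    refine Eq.trans (Finset.sum_congr rfl fun j _ => ?_) (h (fun i => i.elim0))
    congr 1
    by_cases hj : (Q j).Nonempty
    · obtain ⟨q, hq⟩ := hj
      have hq' : (fun i : Fin 0 => i.elim0) ∈ Q j := by
        have : q = (fun i : Fin 0 => i.elim0) := by funext i; exact i.elim0
        rwa [this] at hq
      rw [if_pos ⟨q, hq⟩, Set.indicator_of_mem hq']
    · rw [if_neg hj, Set.indicator_of_notMem (fun hm => hj ⟨_, hm⟩)]
  | succ k ih =>
    intro m a Q hc hv h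
    set π : (Fin (k+1) → ℝ) → (Fin k → ℝ) := fun y i => y i.castSucc with hπ
    set Q' : Fin m → Set (Fin k → ℝ) := fun j => π '' (Q j) with hQ'
    have hπc : Continuous π := continuous_pi (fun i => continuous_apply _)
    have hπl : IsLinearMap ℝ π := ⟨fun x y => rfl, fun c x => rfl⟩
    have hQ'c : ∀ j, IsCompact (Q' j) := fun j => (hc j).image hπc
    have hQ'v : ∀ j, Convex ℝ (Q' j) := fun j => (hv j).is_linear_image hπl
    have hproj : ∀ j (y : Fin k → ℝ), y ∈ Q' j ↔ ∃ t : ℝ, Fin.snoc y t ∈ Q j := by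
      intro j y
      constructor
      · rintro ⟨q, hq, rfl⟩
        refine ⟨q (Fin.last k), ?_⟩
        have : (Fin.snoc (π q) (q (Fin.last k)) : Fin (k+1) → ℝ) = q := by
          funext i
          induction i using Fin.lastCases with
          | last => simp [Fin.snoc_last]
          | cast i => simp [Fin.snoc_castSucc, hπ]
        rwa [this]
      · rintro ⟨t, ht⟩
        refine ⟨Fin.snoc y t, ht, ?_⟩
        funext i
        simp [hπ, Fin.snoc_castSucc]
    have h' : ∀ y, ∑ j, a j * (Q' j).indicator (fun _ => (1:ℤ)) y = 0 := by
      intro y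
      set S : Fin m → Set ℝ := fun j => {t | Fin.snoc y t ∈ Q j} with hS
      have hsnoc_cont : Continuous (fun t : ℝ => (Fin.snoc y t : Fin (k+1) → ℝ)) := by
        apply continuous_pi
        intro i
        induction i using Fin.lastCases with
        | last => simpa [Fin.snoc_last] using continuous_id'
        | cast i => simpa [Fin.snoc_castSucc] using continuous_const
      have hSc : ∀ j, IsCompact (S j) := by
        intro j
        apply IsCompact.of_isClosed_subset ((hc j).image (continuous_apply (Fin.last k)))
        · exact (hc j).isClosed.preimage hsnoc_cont
        · intro t ht
          exact ⟨Fin.snoc y t, ht, by simp [Fin.snoc_last]⟩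
      have hSv : ∀ j, Convex ℝ (S j) := by
        intro j s hs t ht α β hα hβ hab
        have hkey : (Fin.snoc y (α • s + β • t) : Fin (k+1) → ℝ)
            = α • (Fin.snoc y s : Fin (k+1) → ℝ) + β • (Fin.snoc y t : Fin (k+1) → ℝ) := by
          funext i
          induction i using Fin.lastCases with
          | last => simp [Fin.snoc_last]
          | cast i =>
            simp only [Fin.snoc_castSucc, Pi.add_apply, Pi.smul_apply, smul_eq_mul]
            have : α * y i + β * y i = (α + β) * y i := by ring
            rw [this, hab, one_mul]
        show Fin.snoc y (α • s + β • t) ∈ Q j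
        rw [hkey]
        exact (hv j) hs ht hα hβ hab
      refine Eq.trans (Finset.sum_congr rfl fun j _ => ?_)
        (euler_dim1 a S hSc hSv (fun t => h (Fin.snoc y t)))
      congr 1
      by_cases hy : y ∈ Q' j
      · have hne : (S j).Nonempty := by
          obtain ⟨t, ht⟩ := (hproj j y).1 hy
          exact ⟨t, ht⟩
        rw [Set.indicator_of_mem hy, if_pos hne]
      · have hne : ¬ (S j).Nonempty := by
          rintro ⟨t, ht⟩
          exact hy ((hproj j y).2 ⟨t, ht⟩)
        rw [Set.indicator_of_notMem hy, if_neg hne]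
    refine Eq.trans (Finset.sum_congr rfl fun j _ => ?_) (ih a Q' hQ'c hQ'v h')
    congr 1
    by_cases hj : (Q j).Nonempty
    · rw [if_pos hj, if_pos (hj.image π)]
    · rw [if_neg hj, if_neg ?_]
      rintro ⟨y, q, hq, -⟩
      exact hj ⟨q, hq⟩

end Euler

section Completion

variable {K : Type*} [Field K] {d n : ℕ} (M : Matrix (Fin d) (Fin n) K)

lemma exists_completion (hMr : M.rank = d) (x : Fin n → ℝ) (hx0 : ∀ i, 0 ≤ x i)
    (hxI : ∀ A : Finset (Fin n), ∑ i ∈ A, x i ≤ (colRank M A : ℝ)) :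
    ∃ y : Fin n → ℝ, (∀ i, x i ≤ y i) ∧ y ∈ rankPolytope M := by
  have main : ∀ T : Finset (Fin n), ∃ y : Fin n → ℝ, (∀ i, x i ≤ y i) ∧
      (∀ A : Finset (Fin n), ∑ i ∈ A, y i ≤ (colRank M A : ℝ)) ∧
      (∀ i ∈ T, ∃ A : Finset (Fin n), i ∈ A ∧ ∑ i' ∈ A, y i' = (colRank M A : ℝ)) := by
    intro T
    induction T using Finset.induction with
    | empty => exact ⟨x, fun i => le_refl _, hxI, fun i hi => absurd hi (Finset.notMem_empty i)⟩
    | @insert i T hiT ih =>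
      obtain ⟨y, hxy, hyI, htight⟩ := ih
      set 𝒜 : Finset (Finset (Fin n)) := Finset.univ.filter (fun A => i ∈ A) with h𝒜
      have h𝒜ne : 𝒜.Nonempty := ⟨{i}, by simp [h𝒜]⟩
      set δ : ℝ := 𝒜.inf' h𝒜ne (fun A => (colRank M A : ℝ) - ∑ i' ∈ A, y i') with hδ
      have hδ0 : 0 ≤ δ := by
        apply Finset.le_inf'
        intro A hA
        have := hyI A
        linarith
      set y' : Fin n → ℝ := fun i' => y i' + (if i' = i then δ else 0) with hy'
      have hsum : ∀ A : Finset (Fin n), ∑ i' ∈ A, y' i'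
          = (∑ i' ∈ A, y i') + (if i ∈ A then δ else 0) := by
        intro A
        rw [hy', Finset.sum_add_distrib]
        congr 1
        exact Finset.sum_ite_eq' A i (fun _ => δ)
      have hymono : ∀ i', y i' ≤ y' i' := by
        intro i'
        rw [hy']
        by_cases h : i' = i <;> simp [h, hδ0]
      refine ⟨y', fun i' => le_trans (hxy i') (hymono i'), ?_, ?_⟩
      · intro A
        rw [hsum A]
        by_cases hiA : i ∈ A
        · rw [if_pos hiA]
          have hle : δ ≤ (colRank M A : ℝ) - ∑ i' ∈ A, y i' :=
            Finset.inf'_le _ (by simp [h𝒜, hiA])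
          linarith
        · rw [if_neg hiA, add_zero]
          exact hyI A
      · intro k hk
        rcases Finset.mem_insert.1 hk with rfl | hkT
        · obtain ⟨A₀, hA₀mem, hA₀eq⟩ := Finset.exists_mem_eq_inf' h𝒜ne
            (fun A => (colRank M A : ℝ) - ∑ i' ∈ A, y i')
          have hiA₀ : k ∈ A₀ := (Finset.mem_filter.1 hA₀mem).2
          refine ⟨A₀, hiA₀, ?_⟩
          rw [hsum A₀, if_pos hiA₀, hδ, hA₀eq]
          ring
        · obtain ⟨A, hiA, hAeq⟩ := htight k hkT
          refine ⟨A, hiA, ?_⟩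
          have h1 : ∑ i' ∈ A, y i' ≤ ∑ i' ∈ A, y' i' :=
            Finset.sum_le_sum (fun i' _ => hymono i')
          have h2 : ∑ i' ∈ A, y' i' ≤ (colRank M A : ℝ) := by
            rw [hsum A]
            by_cases hiA' : i ∈ A
            · rw [if_pos hiA']
              have hle : δ ≤ (colRank M A : ℝ) - ∑ i' ∈ A, y i' :=
                Finset.inf'_le _ (by simp [h𝒜, hiA'])
              linarith
            · rw [if_neg hiA', add_zero]; exact hyI A
          linarith
  obtain ⟨y, hxy, hyI, htight⟩ := main Finset.univ
  have tight_union : ∀ A B : Finset (Fin n),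
      (∑ i ∈ A, y i = (colRank M A : ℝ)) → (∑ i ∈ B, y i = (colRank M B : ℝ)) →
      ∑ i ∈ A ∪ B, y i = (colRank M (A ∪ B) : ℝ) := by
    intro A B hA hB
    have h1 : ∑ i ∈ A ∪ B, y i + ∑ i ∈ A ∩ B, y i = ∑ i ∈ A, y i + ∑ i ∈ B, y i :=
      Finset.sum_union_inter
    have h2 : ∑ i ∈ A ∩ B, y i ≤ (colRank M (A ∩ B) : ℝ) := hyI _
    have h3 : (colRank M (A ∪ B) : ℝ) + (colRank M (A ∩ B) : ℝ)
        ≤ (colRank M A : ℝ) + (colRank M B : ℝ) := by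
      exact_mod_cast colRank_submodular M A B
    have h4 : ∑ i ∈ A ∪ B, y i ≤ (colRank M (A ∪ B) : ℝ) := hyI _
    linarith
  have bigtight : ∀ T : Finset (Fin n), ∃ A : Finset (Fin n), T ⊆ A ∧
      ∑ i ∈ A, y i = (colRank M A : ℝ) := by
    intro T
    induction T using Finset.induction with
    | empty =>
      refine ⟨∅, Finset.Subset.refl _, ?_⟩
      simp [colRank_empty]
    | @insert i T hiT ih =>
      obtain ⟨A, hTA, hAeq⟩ := ih
      obtain ⟨B, hiB, hBeq⟩ := htight i (Finset.mem_univ i)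
      refine ⟨A ∪ B, ?_, tight_union A B hAeq hBeq⟩
      intro k hk
      rcases Finset.mem_insert.1 hk with rfl | hkT
      · exact Finset.mem_union_right _ hiB
      · exact Finset.mem_union_left _ (hTA hkT)
  obtain ⟨A, hA, hAeq⟩ := bigtight Finset.univ
  have hAuniv : A = Finset.univ := Finset.univ_subset_iff.1 hA
  rw [hAuniv] at hAeq
  rw [colRank_univ M, hMr] at hAeq
  refine ⟨y, hxy, ?_, hAeq, hyI⟩
  intro i
  refine ⟨le_trans (hx0 i) (hxy i), ?_⟩
  have h1 : ∑ i' ∈ ({i} : Finset (Fin n)), y i' ≤ (colRank M {i} : ℝ) := hyI _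
  rw [Finset.sum_singleton] at h1
  have h2 : (colRank M {i} : ℝ) ≤ 1 := by exact_mod_cast colRank_singleton_le M i
  linarith

end Completion

section Topology

variable {K : Type*} [Field K] {d n : ℕ} (M : Matrix (Fin d) (Fin n) K)

lemma truncQ_eq (x : Fin n → ℝ) :
    {y | y ∈ rankPolytope M ∧ ∀ i, x i ≤ y i}
      = (⋂ i, {y : Fin n → ℝ | 0 ≤ y i}) ∩ ((⋂ i, {y : Fin n → ℝ | y i ≤ 1})
        ∩ ({y : Fin n → ℝ | ∑ i, y i = (d:ℝ)}
        ∩ ((⋂ A : Finset (Fin n), {y : Fin n → ℝ | ∑ i ∈ A, y i ≤ (colRank M A : ℝ)})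
        ∩ (⋂ i, {y : Fin n → ℝ | x i ≤ y i})))) := by
  ext y
  simp only [rankPolytope, Set.mem_setOf_eq, Set.mem_inter_iff, Set.mem_iInter]
  constructor
  · rintro ⟨⟨h1, h2, h3⟩, h4⟩
    exact ⟨fun i => (h1 i).1, fun i => (h1 i).2, h2, h3, h4⟩
  · rintro ⟨h1, h2, h3, h4, h5⟩
    exact ⟨⟨fun i => ⟨h1 i, h2 i⟩, h3, h4⟩, h5⟩

lemma truncQ_isClosed (x : Fin n → ℝ) :
    IsClosed {y | y ∈ rankPolytope M ∧ ∀ i, x i ≤ y i} := by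
  rw [truncQ_eq]
  refine IsClosed.inter (isClosed_iInter fun i => isClosed_le continuous_const (continuous_apply i))
    (IsClosed.inter (isClosed_iInter fun i => isClosed_le (continuous_apply i) continuous_const)
    (IsClosed.inter (isClosed_eq (continuous_finset_sum _ fun i _ => continuous_apply i) continuous_const)
    (IsClosed.inter (isClosed_iInter fun A => isClosed_le (continuous_finset_sum _ fun i _ => continuous_apply i) continuous_const)
    (isClosed_iInter fun i => isClosed_le continuous_const (continuous_apply i)))))

lemma truncQ_isCompact (x : Fin n → ℝ) :
    IsCompact {y | y ∈ rankPolytope M ∧ ∀ i, x i ≤ y i} := by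
  apply IsCompact.of_isClosed_subset
    (isCompact_univ_pi (fun _ : Fin n => isCompact_Icc (a := (0:ℝ)) (b := 1)))
    (truncQ_isClosed M x)
  rintro y ⟨⟨h1, -, -⟩, -⟩
  intro i _
  exact ⟨(h1 i).1, (h1 i).2⟩

lemma truncQ_convex (x : Fin n → ℝ) :
    Convex ℝ {y | y ∈ rankPolytope M ∧ ∀ i, x i ≤ y i} := by
  rintro y ⟨⟨hy1, hy2, hy3⟩, hy4⟩ z ⟨⟨hz1, hz2, hz3⟩, hz4⟩ α β hα hβ hab
  have happ : ∀ i, (α • y + β • z) i = α * y i + β * z i := by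
    intro i
    simp [Pi.add_apply, Pi.smul_apply, smul_eq_mul]
  have hsum : ∀ A : Finset (Fin n), ∑ i ∈ A, (α • y + β • z) i
      = α * (∑ i ∈ A, y i) + β * (∑ i ∈ A, z i) := by
    intro A
    rw [Finset.mul_sum, Finset.mul_sum, ← Finset.sum_add_distrib]
    exact Finset.sum_congr rfl fun i _ => happ i
  refine ⟨⟨?_, ?_, ?_⟩, ?_⟩
  · intro i
    rw [happ i]
    constructor
    · have := mul_nonneg hα (hy1 i).1
      have := mul_nonneg hβ (hz1 i).1
      linarith
    · have h1 : α * y i ≤ α * 1 := mul_le_mul_of_nonneg_left (hy1 i).2 hα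
      have h2 : β * z i ≤ β * 1 := mul_le_mul_of_nonneg_left (hz1 i).2 hβ
      nlinarith
  · have : ∑ i, (α • y + β • z) i = α * (∑ i, y i) + β * (∑ i, z i) := hsum Finset.univ
    rw [this, hy2, hz2]
    nlinarith
  · intro A
    rw [hsum A]
    have h1 : α * (∑ i ∈ A, y i) ≤ α * (colRank M A : ℝ) :=
      mul_le_mul_of_nonneg_left (hy3 A) hα
    have h2 : β * (∑ i ∈ A, z i) ≤ β * (colRank M A : ℝ) :=
      mul_le_mul_of_nonneg_left (hz3 A) hβ
    nlinarith
  · intro i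
    rw [happ i]
    have h1 : α * x i ≤ α * y i := mul_le_mul_of_nonneg_left (hy4 i) hα
    have h2 : β * x i ≤ β * z i := mul_le_mul_of_nonneg_left (hz4 i) hβ
    have h3 : α * x i + β * x i = x i := by rw [← add_mul, hab, one_mul]
    linarith

end Topology

/-- For `d × n` matrices `M₁, …, M_m` of rank `d`, the integer combination
`∑ aⱼ · 1_{P_{Mⱼ}}` vanishes identically iff `∑ aⱼ · 1_{I_{Mⱼ}}` does. -/
theorem rank_indicator_rel_iff_indep_indicator_rel
    {K : Type*} [Field K] {d n m : ℕ} (hd : 0 < d) (hn : 0 < n)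
    (M : Fin m → Matrix (Fin d) (Fin n) K) (hM : ∀ j, (M j).rank = d)
    (a : Fin m → ℤ) :
    (∀ x : Fin n → ℝ,
        ∑ j, a j * (rankPolytope (M j)).indicator (fun _ => (1 : ℤ)) x = 0) ↔
      (∀ x : Fin n → ℝ,
        ∑ j, a j * (indepPolytope (M j)).indicator (fun _ => (1 : ℤ)) x = 0) := by
  constructor
  · intro hP x
    by_cases hx0 : ∀ i, 0 ≤ x i
    · set Q : Fin m → Set (Fin n → ℝ) :=
        fun j => {y | y ∈ rankPolytope (M j) ∧ ∀ i, x i ≤ y i} with hQ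
      have hcomp : ∀ j, IsCompact (Q j) := fun j => truncQ_isCompact (M j) x
      have hconv : ∀ j, Convex ℝ (Q j) := fun j => truncQ_convex (M j) x
      have hpt : ∀ y, ∑ j, a j * (Q j).indicator (fun _ => (1:ℤ)) y = 0 := by
        intro y
        by_cases hxy : ∀ i, x i ≤ y i
        · refine Eq.trans (Finset.sum_congr rfl fun j _ => ?_) (hP y)
          congr 1
          by_cases hyP : y ∈ rankPolytope (M j)
          · rw [Set.indicator_of_mem (show y ∈ Q j from ⟨hyP, hxy⟩), Set.indicator_of_mem hyP]
          · rw [Set.indicator_of_notMem (show y ∉ Q j from fun hm => hyP hm.1),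
              Set.indicator_of_notMem hyP]
        · apply Finset.sum_eq_zero
          intro j _
          rw [Set.indicator_of_notMem (show y ∉ Q j from fun hm => hxy hm.2), mul_zero]
      refine Eq.trans (Finset.sum_congr rfl fun j _ => ?_)
        (euler_nonempty n a Q hcomp hconv hpt)
      congr 1
      by_cases hxI : x ∈ indepPolytope (M j)
      · rw [Set.indicator_of_mem hxI]
        obtain ⟨y, hxy, hyP⟩ := exists_completion (M j) (hM j) x hxI.1 hxI.2
        rw [if_pos ⟨y, hyP, hxy⟩]
      · rw [Set.indicator_of_notMem hxI, if_neg ?_]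
        rintro ⟨y, hyP, hxy⟩
        exact hxI ⟨hx0, fun A =>
          le_trans (Finset.sum_le_sum fun i _ => hxy i) (hyP.2.2 A)⟩
    · push_neg at hx0
      obtain ⟨i, hi⟩ := hx0
      apply Finset.sum_eq_zero
      intro j _
      rw [Set.indicator_of_notMem (fun hmem => absurd (hmem.1 i) (not_le.2 hi)), mul_zero]
  · intro hI x
    by_cases hs : ∑ i, x i = (d:ℝ)
    · refine Eq.trans (Finset.sum_congr rfl fun j _ => ?_) (hI x)
      congr 1
      by_cases hx : x ∈ indepPolytope (M j)
      · have hxP : x ∈ rankPolytope (M j) := by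
          refine ⟨fun i => ⟨hx.1 i, ?_⟩, hs, hx.2⟩
          have h1 := hx.2 {i}
          rw [Finset.sum_singleton] at h1
          have h2 : (colRank (M j) {i} : ℝ) ≤ 1 := by
            exact_mod_cast colRank_singleton_le (M j) i
          linarith
        rw [Set.indicator_of_mem hxP, Set.indicator_of_mem hx]
      · have hxP : x ∉ rankPolytope (M j) := fun hm => hx ⟨fun i => (hm.1 i).1, hm.2.2⟩
        rw [Set.indicator_of_notMem hxP, Set.indicator_of_notMem hx]
    · apply Finset.sum_eq_zero
      intro j _
      rw [Set.indicator_of_notMem (fun hmem => hs hmem.2.1), mul_zero]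
end
end

section
/- Let P₁, …, P_m ⊆ ℝⁿ be closed convex polyhedra (each a finite intersection of closed half-spaces), let a₁, …, a_m be integers, and let v ∈ ℝⁿ. If ∑_{j=1}^m aⱼ·1_{Pⱼ} is identically zero as a function ℝⁿ → ℤ, then ∑_{j=1}^m aⱼ·1_{Pⱼ + ℝ_{≥0}v} is identically zero, where Pⱼ + ℝ_{≥0}v denotes the Minkowski sum {p + λv : p ∈ Pⱼ, λ ≥ 0} and 1_S is the indicator function of S. -/
/-- A closed convex polyhedron in `ℝⁿ`: a finite intersection of closed half-spaces. -/
def IsPolyhedron {n : ℕ} (P : Set (Fin n → ℝ)) : Prop :=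
  ∃ (k : ℕ) (f : Fin k → Fin n → ℝ) (c : Fin k → ℝ),
    P = {x | ∀ i, ∑ t, f i t * x t ≤ c i}

/-- Minkowski sum of a set with the ray `ℝ_{≥0} v`. -/
def raySum {n : ℕ} (P : Set (Fin n → ℝ)) (v : Fin n → ℝ) : Set (Fin n → ℝ) :=
  {x | ∃ p ∈ P, ∃ t : ℝ, 0 ≤ t ∧ x = p + t • v}

/-- Adding a ray to each polyhedron preserves linear relations among indicator functions. -/
theorem indicator_rel_raySum {n m : ℕ} (P : Fin m → Set (Fin n → ℝ))
    (hP : ∀ j, IsPolyhedron (P j)) (a : Fin m → ℤ) (v : Fin n → ℝ)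
    (h : ∀ x : Fin n → ℝ, ∑ j, a j * (P j).indicator (fun _ => (1 : ℤ)) x = 0) :
    ∀ x : Fin n → ℝ, ∑ j, a j * (raySum (P j) v).indicator (fun _ => (1 : ℤ)) x = 0 := by
  classical
  choose k F c hPfc using hP
  intro x
  -- the "trace" of P j on the line t ↦ x - t • v
  set T : Fin m → Set ℝ := fun j => {t | x - t • v ∈ P j} with hTdef
  set f : Fin m → ℝ → ℤ := fun j t => if t ∈ T j then 1 else 0 with hfdef
  have hg : ∀ t : ℝ, ∑ j, a j * f j t = 0 := by
    intro t
    have := h (x - t • v)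
    simpa [Set.indicator_apply, hfdef, hTdef] using this
  -- linear description of T j
  have hTlin : ∀ j, T j =
      {t : ℝ | ∀ i, (∑ u, F j i u * x u) - t * (∑ u, F j i u * v u) ≤ c j i} := by
    intro j
    have key : ∀ (i : Fin (k j)) (t : ℝ), ∑ u, F j i u * (x - t • v) u
        = (∑ u, F j i u * x u) - t * (∑ u, F j i u * v u) := by
      intro i t
      rw [Finset.mul_sum, ← Finset.sum_sub_distrib]
      apply Finset.sum_congr rfl
      intro u _
      simp only [Pi.sub_apply, Pi.smul_apply, smul_eq_mul]
      ring
    ext t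
    simp only [hTdef, Set.mem_setOf_eq, hPfc j, key]
  have hTclosed : ∀ j, IsClosed (T j) := by
    intro j
    rw [hTlin j]
    have : {t : ℝ | ∀ i, (∑ u, F j i u * x u) - t * (∑ u, F j i u * v u) ≤ c j i}
        = ⋂ i, {t : ℝ | (∑ u, F j i u * x u) - t * (∑ u, F j i u * v u) ≤ c j i} := by
      ext t; simp
    rw [this]
    exact isClosed_iInter fun i => isClosed_le (by fun_prop) continuous_const
  have hTconv : ∀ j (s₁ s₂ t : ℝ), s₁ ∈ T j → s₂ ∈ T j → s₁ ≤ t → t ≤ s₂ → t ∈ T j := by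
    intro j s₁ s₂ t h1 h2 hl hr
    rw [hTlin j] at h1 h2 ⊢
    intro i
    have h1i := h1 i
    have h2i := h2 i
    rcases le_or_gt 0 (∑ u, F j i u * v u) with hB | hB
    · nlinarith [mul_nonneg (sub_nonneg.mpr hl) hB]
    · nlinarith [mul_nonneg (sub_nonneg.mpr hr) (le_of_lt (neg_pos.mpr hB))]
  -- left limit predicate
  set leftIn : Fin m → ℝ → Prop :=
    fun j t => ∃ ε > (0:ℝ), ∀ s, t - ε < s → s < t → s ∈ T j with hLdef
  set fL : Fin m → ℝ → ℤ := fun j t => if leftIn j t then 1 else 0 with hfLdef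
  -- common window on which every f j is constant to the left of t
  have hwin : ∀ t : ℝ, ∃ ε > (0:ℝ), ∀ j, ∀ s, t - ε < s → s < t → (s ∈ T j ↔ leftIn j t) := by
    intro t
    have perj : ∀ j, ∃ ε > (0:ℝ), ∀ s, t - ε < s → s < t → (s ∈ T j ↔ leftIn j t) := by
      intro j
      by_cases hL : leftIn j t
      · obtain ⟨ε, hε, hsub⟩ := id hL
        exact ⟨ε, hε, fun s h1 h2 => iff_of_true (hsub s h1 h2) hL⟩
      · by_cases hnone : ∀ s, s < t → s ∉ T j
        · exact ⟨1, one_pos, fun s h1 h2 => iff_of_false (hnone s h2) hL⟩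
        · push_neg at hnone
          obtain ⟨s₀, hs₀t, hs₀T⟩ := hnone
          have : ¬ (∀ s, t - (t - s₀) < s → s < t → s ∈ T j) := by
            intro hh
            exact hL ⟨t - s₀, by linarith, hh⟩
          push_neg at this
          obtain ⟨s₁, hs₁l, hs₁r, hs₁T⟩ := this
          refine ⟨t - s₁, by linarith, fun s h1 h2 => iff_of_false (fun hsT =>
            hs₁T (hTconv j s₀ s s₁ hs₀T hsT (by linarith) (by linarith))) hL⟩
    choose ε hε hprop using perj
    refine ⟨(insert 1 (Finset.univ.image ε)).min' (Finset.insert_nonempty _ _), ?_, ?_⟩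
    · rw [gt_iff_lt, Finset.lt_min'_iff]
      intro b hb
      rcases Finset.mem_insert.mp hb with rfl | hb
      · exact one_pos
      · obtain ⟨j, _, rfl⟩ := Finset.mem_image.mp hb
        exact hε j
    · intro j s h1 h2
      have hle : (insert 1 (Finset.univ.image ε)).min' (Finset.insert_nonempty _ _) ≤ ε j :=
        Finset.min'_le _ _ (Finset.mem_insert.mpr (Or.inr (Finset.mem_image_of_mem ε (Finset.mem_univ j))))
      exact hprop j s (by linarith) h2
  -- the linear combination of jumps vanishes at every point
  have hjumpsum : ∀ t : ℝ, ∑ j, a j * (f j t - fL j t) = 0 := by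
    intro t
    obtain ⟨ε, hε, hw⟩ := hwin t
    have hs1 : t - ε < t - ε / 2 := by linarith
    have hs2 : t - ε / 2 < t := by linarith
    have hfL : ∀ j, fL j t = f j (t - ε / 2) := by
      intro j
      simp only [hfLdef, hfdef]
      exact (if_congr ((hw j _ hs1 hs2)).symm rfl rfl)
    have : ∑ j, a j * (f j t - fL j t)
        = (∑ j, a j * f j t) - ∑ j, a j * f j (t - ε / 2) := by
      rw [← Finset.sum_sub_distrib]
      apply Finset.sum_congr rfl
      intro j _
      rw [hfL j]; ring
    rw [this, hg, hg]; ring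
  -- characterization of the jump: it is 1 exactly at the minimum of T j
  have hjumpchar : ∀ j (t : ℝ), f j t - fL j t
      = if (t ∈ T j ∧ ∀ s, s < t → s ∉ T j) then 1 else 0 := by
    intro j t
    by_cases h1 : t ∈ T j
    · by_cases h2 : ∀ s, s < t → s ∉ T j
      · have hnL : ¬ leftIn j t := by
          rintro ⟨ε, hε, hsub⟩
          exact h2 (t - ε / 2) (by linarith) (hsub _ (by linarith) (by linarith))
        simp only [hfdef, hfLdef]
        rw [if_pos h1, if_neg hnL, if_pos ⟨h1, h2⟩]
        ring
      · push_neg at h2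
        obtain ⟨s₀, hs₀t, hs₀T⟩ := h2
        have hL : leftIn j t := by
          refine ⟨t - s₀, by linarith, fun s hl hr => ?_⟩
          exact hTconv j s₀ t s hs₀T h1 (by linarith) (le_of_lt hr)
        have hcond : ¬ (t ∈ T j ∧ ∀ s, s < t → s ∉ T j) := by
          rintro ⟨-, hh⟩; exact hh s₀ hs₀t hs₀T
        simp only [hfdef, hfLdef]
        rw [if_pos h1, if_pos hL, if_neg hcond]
        ring
    · have hnL : ¬ leftIn j t := by
        rintro ⟨ε, hε, hsub⟩
        have hsub' : Set.Ioo (t - ε) t ⊆ T j := fun s hs => hsub s hs.1 hs.2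
        have ht : t ∈ closure (Set.Ioo (t - ε) t) := by
          rw [closure_Ioo (by linarith : t - ε ≠ t)]
          exact ⟨by linarith, le_refl t⟩
        have := closure_mono hsub' ht
        rw [(hTclosed j).closure_eq] at this
        exact h1 this
      have hcond : ¬ (t ∈ T j ∧ ∀ s, s < t → s ∉ T j) := fun hh => h1 hh.1
      simp only [hfdef, hfLdef]
      rw [if_neg h1, if_neg hnL, if_neg hcond]
      ring
  -- the nonnegative part of T j, its minimum, and the set of jump points
  set S : Fin m → Set ℝ := fun j => {t | 0 ≤ t ∧ t ∈ T j} with hSdef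
  have hSclosed : ∀ j, IsClosed (S j) := by
    intro j
    have : S j = Set.Ici (0:ℝ) ∩ T j := by
      ext t; simp [hSdef, Set.mem_Ici, and_comm]
    rw [this]
    exact isClosed_Ici.inter (hTclosed j)
  have hray : ∀ j, x ∈ raySum (P j) v ↔ (S j).Nonempty := by
    intro j
    constructor
    · rintro ⟨p, hp, t, ht, rfl⟩
      refine ⟨t, ht, ?_⟩
      simp only [hTdef, Set.mem_setOf_eq, add_sub_cancel_right]
      exact hp
    · rintro ⟨t, ht0, htT⟩
      exact ⟨x - t • v, htT, t, ht0, (sub_add_cancel x (t • v)).symm⟩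
  set μ : Fin m → ℝ := fun j => sInf (S j) with hμdef
  have hμmem : ∀ j, (S j).Nonempty → μ j ∈ S j := by
    intro j hne
    exact (hSclosed j).csInf_mem hne ⟨0, fun t ht => ht.1⟩
  have hμle : ∀ j, ∀ s ∈ S j, μ j ≤ s := by
    intro j s hs
    exact csInf_le ⟨0, fun t ht => ht.1⟩ hs
  set Fs : Finset ℝ :=
    ((Finset.univ.filter (fun j => (S j).Nonempty)).image μ).filter (fun t => 0 < t) with hFsdef
  -- key identity for each j
  have hC3 : ∀ j, (if x ∈ raySum (P j) v then (1:ℤ) else 0)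
      = f j 0 + ∑ t ∈ Fs, (f j t - fL j t) := by
    intro j
    by_cases hne : (S j).Nonempty
    · rw [if_pos ((hray j).mpr hne)]
      have hμS := hμmem j hne
      rcases eq_or_lt_of_le hμS.1 with hμ0 | hμpos
      · -- μ j = 0 : the indicator at 0 is already 1, no jumps on (0, ∞)
        have h0T : (0:ℝ) ∈ T j := by rw [hμ0]; exact hμS.2
        have hsum0 : ∑ t ∈ Fs, (f j t - fL j t) = 0 := by
          apply Finset.sum_eq_zero
          intro t ht
          have htpos : 0 < t := (Finset.mem_filter.mp ht).2
          rw [hjumpchar j t, if_neg]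
          rintro ⟨-, hmin⟩
          exact hmin 0 htpos h0T
        rw [hsum0]
        simp [hfdef, h0T]
      · -- μ j > 0 : indicator at 0 is 0, there is exactly one jump, at μ j
        have h0T : (0:ℝ) ∉ T j := by
          intro h0
          exact absurd (hμle j 0 ⟨le_refl 0, h0⟩) (not_le.mpr hμpos)
        have hjump_iff : ∀ t ∈ Fs, ((t ∈ T j ∧ ∀ s, s < t → s ∉ T j) ↔ t = μ j) := by
          intro t ht
          have htpos : 0 < t := (Finset.mem_filter.mp ht).2
          constructor
          · rintro ⟨htT, hmin⟩
            have hμt : μ j ≤ t := hμle j t ⟨le_of_lt htpos, htT⟩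
            rcases eq_or_lt_of_le hμt with heq | hlt
            · exact heq.symm
            · exact absurd (hμS.2) (hmin (μ j) hlt)
          · rintro rfl
            refine ⟨hμS.2, fun s hst hsT => ?_⟩
            rcases le_or_gt 0 s with hs0 | hs0
            · exact absurd (hμle j s ⟨hs0, hsT⟩) (not_le.mpr hst)
            · have : (0:ℝ) ∈ T j := hTconv j s (μ j) 0 hsT hμS.2 (le_of_lt hs0) hμS.1
              exact h0T this
        have hμFs : μ j ∈ Fs := by
          rw [hFsdef]
          refine Finset.mem_filter.mpr ⟨?_, hμpos⟩
          exact Finset.mem_image_of_mem μ (Finset.mem_filter.mpr ⟨Finset.mem_univ j, hne⟩)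
        have hsum1 : ∑ t ∈ Fs, (f j t - fL j t) = 1 := by
          have : ∀ t ∈ Fs, (f j t - fL j t) = if t = μ j then 1 else 0 := by
            intro t ht
            rw [hjumpchar j t]
            exact if_congr (hjump_iff t ht) rfl rfl
          rw [Finset.sum_congr rfl this, Finset.sum_ite_eq' Fs (μ j) (fun _ => (1:ℤ)),
            if_pos hμFs]
        rw [hsum1]
        simp [hfdef, h0T]
    · -- S j empty : x not in the ray sum, indicator at 0 is 0, no jumps
      rw [if_neg (fun hx => hne ((hray j).mp hx))]
      have h0T : (0:ℝ) ∉ T j := fun h0 => hne ⟨0, le_refl 0, h0⟩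
      have hsum0 : ∑ t ∈ Fs, (f j t - fL j t) = 0 := by
        apply Finset.sum_eq_zero
        intro t ht
        have htpos : 0 < t := (Finset.mem_filter.mp ht).2
        rw [hjumpchar j t, if_neg]
        rintro ⟨htT, -⟩
        exact hne ⟨t, le_of_lt htpos, htT⟩
      rw [hsum0]
      simp [hfdef, h0T]
  -- final assembly
  have hind : ∀ j, (raySum (P j) v).indicator (fun _ => (1:ℤ)) x
      = if x ∈ raySum (P j) v then 1 else 0 := fun j => Set.indicator_apply _ _ _
  calc ∑ j, a j * (raySum (P j) v).indicator (fun _ => (1:ℤ)) x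
      = ∑ j, a j * (f j 0 + ∑ t ∈ Fs, (f j t - fL j t)) := by
        apply Finset.sum_congr rfl
        intro j _
        rw [hind j, hC3 j]
    _ = (∑ j, a j * f j 0) + ∑ j, ∑ t ∈ Fs, a j * (f j t - fL j t) := by
        rw [← Finset.sum_add_distrib]
        apply Finset.sum_congr rfl
        intro j _
        rw [mul_add, Finset.mul_sum]
    _ = 0 + ∑ t ∈ Fs, ∑ j, a j * (f j t - fL j t) := by rw [hg 0, Finset.sum_comm]
    _ = 0 := by
        rw [zero_add]
        exact Finset.sum_eq_zero fun t _ => hjumpsum t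
end

section
/- Let K be a field and let M be a connected d×n matrix over K with columns x₁, …, xₙ ∈ K^d. If g is an invertible d×d matrix over K such that every xᵢ is an eigenvector of g (for each i there exists cᵢ ∈ K with g·xᵢ = cᵢ·xᵢ), then g is a scalar multiple of the identity matrix. -/
noncomputable section

/-- A `d × n` matrix is connected if it has rank `d` and there is no proper nonempty
subset `A` of the columns with `rk(A) + rk(Aᶜ) = d`. -/
def IsConnectedMatrix {K : Type*} [Field K] {d n : ℕ}
    (M : Matrix (Fin d) (Fin n) K) : Prop :=
  colRank M Finset.univ = d ∧
    ¬∃ A : Finset (Fin n), A ≠ ∅ ∧ A ≠ Finset.univ ∧ colRank M A + colRank M Aᶜ = d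

open Module Submodule in
lemma colRank_eq_finrank_span {K : Type*} [Field K] {d n : ℕ}
    (M : Matrix (Fin d) (Fin n) K) (A : Finset (Fin n)) :
    colRank M A = finrank K (span K ((fun i j => M j i) '' (A : Set (Fin n)))) := by
  rw [colRank, Matrix.rank_eq_finrank_span_cols]
  have hset : Set.range (Matrix.col (M.submatrix id ((↑) : A → Fin n)))
      = (fun i j => M j i) '' (A : Set (Fin n)) := by
    ext v
    constructor
    · rintro ⟨a, rfl⟩
      exact ⟨a, a.2, rfl⟩
    · rintro ⟨i, hi, rfl⟩
      exact ⟨⟨i, hi⟩, rfl⟩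
  rw [hset]

/-- If every column of a connected matrix `M` is an eigenvector of an invertible matrix `g`,
then `g` is a scalar multiple of the identity. -/
theorem scalar_of_columns_eigenvectors {K : Type*} [Field K] {d n : ℕ}
    (M : Matrix (Fin d) (Fin n) K) (hM : IsConnectedMatrix M)
    (g : Matrix (Fin d) (Fin d) K) (hg : IsUnit g)
    (heig : ∀ i : Fin n, ∃ c : K,
      g.mulVec (fun j => M j i) = c • (fun j => M j i)) :
    ∃ c : K, g = c • (1 : Matrix (Fin d) (Fin d) K) := by
  classical
  rcases Nat.eq_zero_or_pos d with hd | hd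
  · subst hd
    exact ⟨1, by ext i j; exact i.elim0⟩
  set x : Fin n → (Fin d → K) := fun i j => M j i with hxdef
  set f : Module.End K (Fin d → K) := g.mulVecLin with hfdef
  -- the columns span everything
  have htop : Submodule.span K (x '' (Finset.univ : Finset (Fin n))) = ⊤ := by
    apply Submodule.eq_top_of_finrank_eq
    rw [← colRank_eq_finrank_span, hM.1, Module.finrank_fin_fun]
  -- final step: if all columns have a common eigenvalue c, then g = c • 1
  have key : ∀ c : K, (∀ i : Fin n, f (x i) = c • x i) →
      g = c • (1 : Matrix (Fin d) (Fin d) K) := by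
    intro c hc
    have hfg : f = c • (LinearMap.id : Module.End K (Fin d → K)) := by
      apply LinearMap.ext_on htop
      rintro v ⟨i, -, rfl⟩
      simpa using hc i
    have hv : ∀ v : Fin d → K, g.mulVec v = c • v := by
      intro v
      have := LinearMap.congr_fun hfg v
      simpa [hfdef] using this
    ext i j
    have h1 := congrFun (hv (Pi.single j 1)) i
    simp only [Matrix.mulVec, dotProduct_single, mul_one, Pi.smul_apply,
      Pi.single_apply, smul_eq_mul, mul_ite, mul_zero] at h1
    simp only [Matrix.smul_apply, Matrix.one_apply, smul_eq_mul, mul_ite, mul_one, mul_zero]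
    rw [h1]
  -- there is a nonzero column
  have hnz : ∃ i : Fin n, x i ≠ 0 := by
    by_contra h
    push_neg at h
    have hone : (fun _ => (1 : K) : Fin d → K) ∈
        Submodule.span K (x '' (Finset.univ : Finset (Fin n))) := by
      rw [htop]; trivial
    have hbot : Submodule.span K (x '' (Finset.univ : Finset (Fin n))) ≤ ⊥ := by
      rw [Submodule.span_le]
      rintro v ⟨i, -, rfl⟩
      simp [h i]
    have := hbot hone
    simp only [Submodule.mem_bot] at this
    have h0 := congrFun this ⟨0, hd⟩
    exact one_ne_zero h0
  obtain ⟨i0, hi0⟩ := hnz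
  obtain ⟨c, hc⟩ := heig i0
  set A : Finset (Fin n) := Finset.univ.filter (fun i => f (x i) = c • x i) with hAdef
  by_cases hA : A = Finset.univ
  · refine ⟨c, key c (fun i => ?_)⟩
    have : i ∈ A := hA ▸ Finset.mem_univ i
    simpa [hAdef] using (Finset.mem_filter.mp this).2
  · exfalso
    apply hM.2
    refine ⟨A, ?_, hA, ?_⟩
    · intro h0
      have : i0 ∈ A := Finset.mem_filter.mpr ⟨Finset.mem_univ _, hc⟩
      simp [h0] at this
    · -- rank additivity
      set p := Submodule.span K (x '' (A : Set (Fin n))) with hpdef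
      set q := Submodule.span K (x '' ((Aᶜ : Finset (Fin n)) : Set (Fin n))) with hqdef
      have hsup : p ⊔ q = ⊤ := by
        rw [hpdef, hqdef, ← Submodule.span_union, ← Set.image_union, ← htop]
        congr 2
        rw [← Finset.coe_union, Finset.union_compl]
      have hp : p ≤ Module.End.eigenspace f c := by
        rw [hpdef, Submodule.span_le]
        rintro v ⟨i, hi, rfl⟩
        rw [SetLike.mem_coe, Module.End.mem_eigenspace_iff]
        simpa [hAdef] using (Finset.mem_filter.mp hi).2
      have hq : q ≤ ⨆ μ ∈ {μ : K | μ ≠ c}, Module.End.eigenspace f μ := by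
        rw [hqdef, Submodule.span_le]
        rintro v ⟨i, hi, rfl⟩
        obtain ⟨ci, hci⟩ := heig i
        have hci' : f (x i) = ci • x i := hci
        have hine : ¬ (f (x i) = c • x i) := by
          intro hfe
          exact (Finset.mem_compl.mp (Finset.mem_coe.mp hi))
            (Finset.mem_filter.mpr ⟨Finset.mem_univ _, hfe⟩)
        have hcine : ci ≠ c := by
          rintro rfl; exact hine hci'
        have hmem : x i ∈ Module.End.eigenspace f ci :=
          Module.End.mem_eigenspace_iff.mpr hci'
        exact Submodule.mem_iSup_of_mem ci (Submodule.mem_iSup_of_mem hcine hmem)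
      have hdisj : Disjoint p q := by
        refine Disjoint.mono hp hq ?_
        exact (Module.End.eigenspaces_iSupIndep f).disjoint_biSup (by simp)
      have hfin := Submodule.finrank_sup_add_finrank_inf_eq p q
      rw [hsup, hdisj.eq_bot, finrank_bot, finrank_top, Module.finrank_fin_fun,
        add_zero] at hfin
      rw [colRank_eq_finrank_span, colRank_eq_finrank_span]
      exact hfin.symm
end
end

section
/- Let R be a commutative ring, let r ≥ 0 be an integer, and let F ∈ R[X] be a monic polynomial of degree r+1. Working in the polynomial ring R[z][H] (polynomials in H over R[z]), let G be the unique polynomial satisfying (z − H)·G = F(z) − F(H). Then for every polynomial f ∈ R[X] of degree at most r, the coefficient of H^r in the remainder of G·f(H) upon division by the monic polynomial F(H) (division with respect to H over the ring R[z]) equals f(z). -/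
open Polynomial Finset

/-- Working in `R[z][H]` (where `z` is the variable of the inner `Polynomial R` and `H`
the outer variable): if `(z − H)·G = F(z) − F(H)` and `f` has degree at most `r`, then
the coefficient of `H^r` in the remainder of `G·f(H)` modulo the monic polynomial `F(H)`
equals `f(z)`, i.e. `f` itself. -/
theorem coeff_modByMonic_divided_difference {R : Type*} [CommRing R] (r : ℕ)
    (F : Polynomial R) (hF : F.Monic) (hFdeg : F.natDegree = r + 1)
    (G : Polynomial (Polynomial R))
    (hG : (Polynomial.C Polynomial.X - Polynomial.X) * G =
      Polynomial.C F - F.map (Polynomial.C : R →+* Polynomial R))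
    (f : Polynomial R) (hf : f.degree ≤ (r : ℕ)) :
    ((G * f.map (Polynomial.C : R →+* Polynomial R)) %ₘ
        (F.map (Polynomial.C : R →+* Polynomial R))).coeff r = f := by
  nontriviality R
  set Ft : Polynomial (Polynomial R) := F.map (C : R →+* Polynomial R) with hFt
  have hFt_monic : Ft.Monic := hF.map _
  have hFt_deg : Ft.natDegree = r + 1 := by
    rw [hFt, hF.natDegree_map, hFdeg]
  -- rewrite hG with a monic left factor
  have hG' : (X - C X) * G = Ft - C F := by
    linear_combination -hG
  -- the right-hand side is monic of degree r+1
  have hD_deg : (Ft - C F).natDegree = r + 1 := by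
    rw [natDegree_sub_eq_left_of_natDegree_lt, hFt_deg]
    rw [hFt_deg]
    calc (C F : Polynomial (Polynomial R)).natDegree = 0 := natDegree_C _
      _ < r + 1 := Nat.succ_pos _
  have hD_monic : (Ft - C F).Monic := by
    unfold Polynomial.Monic
    rw [Polynomial.leadingCoeff, hD_deg, coeff_sub, coeff_C,
      if_neg (Nat.succ_ne_zero r), sub_zero]
    have : Ft.coeff (r + 1) = Ft.leadingCoeff := by rw [Polynomial.leadingCoeff, hFt_deg]
    rw [this, hFt_monic]
  have hD_ne : (Ft - C F) ≠ 0 := hD_monic.ne_zero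
  have hG_ne : G ≠ 0 := by
    rintro rfl
    rw [mul_zero] at hG'
    exact hD_ne hG'.symm
  have hMmonic : (X - C (X : Polynomial R) : Polynomial (Polynomial R)).Monic :=
    monic_X_sub_C _
  have hG_deg : G.natDegree = r := by
    have := hMmonic.natDegree_mul' hG_ne
    rw [hG', hD_deg, natDegree_X_sub_C] at this
    omega
  have hG_monic : G.Monic := by
    have : ((X - C (X : Polynomial R)) * G).leadingCoeff = G.leadingCoeff :=
      leadingCoeff_monic_mul hMmonic
    rw [hG', hD_monic] at this
    exact this.symm
  have hFt_degree : Ft.degree = ((r : ℕ) + 1 : ℕ) := by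
    rw [degree_eq_natDegree hFt_monic.ne_zero, hFt_deg]
  have hG_degree_lt : G.degree < Ft.degree := by
    rw [degree_eq_natDegree hG_ne, hG_deg, hFt_degree]
    exact_mod_cast Nat.lt_succ_self r
  -- key computation by induction
  have key : ∀ k, k ≤ r →
      ((G * (X : Polynomial (Polynomial R)) ^ k) %ₘ Ft).coeff r = (X : Polynomial R) ^ k := by
    intro k
    induction k with
    | zero =>
      intro _
      rw [pow_zero, mul_one, (modByMonic_eq_self_iff hFt_monic).mpr hG_degree_lt]
      have : G.coeff r = G.leadingCoeff := by rw [Polynomial.leadingCoeff, hG_deg]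
      rw [this, hG_monic, pow_zero]
    | succ k ih =>
      intro hk1
      have hk : k ≤ r := Nat.le_of_succ_le hk1
      have hkr : k < r := hk1
      set s : Polynomial (Polynomial R) := (G * X ^ k) %ₘ Ft with hs
      have hs_deg : s.degree < Ft.degree := degree_modByMonic_lt _ hFt_monic
      -- step 1: replace G * X^(k+1) by C X * (G * X^k) - C F * X^k modulo Ft
      have step1 : (G * X ^ (k + 1)) %ₘ Ft =
          (C X * (G * X ^ k) - C F * X ^ k) %ₘ Ft := by
        apply modByMonic_eq_of_dvd_sub hFt_monic
        refine ⟨X ^ k, ?_⟩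
        linear_combination (-(X : Polynomial (Polynomial R)) ^ k) * hG
      -- step 2: replace G * X^k by its remainder s
      have hdvd : Ft ∣ (G * X ^ k - s) := by
        refine ⟨(G * X ^ k) /ₘ Ft, ?_⟩
        rw [hs, modByMonic_eq_sub_mul_div _ Ft]
        ring
      have step2 : (C X * (G * X ^ k) - C F * X ^ k) %ₘ Ft =
          (C X * s - C F * X ^ k) %ₘ Ft := by
        apply modByMonic_eq_of_dvd_sub hFt_monic
        have : (C X * (G * X ^ k) - C F * X ^ k) - (C X * s - C F * X ^ k) =
            C X * (G * X ^ k - s) := by ring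
        rw [this]
        exact hdvd.mul_left _
      -- step 3: the new expression has small degree
      have hdeg1 : (C (X : Polynomial R) * s).degree < Ft.degree := by
        refine lt_of_le_of_lt ?_ hs_deg
        calc (C (X : Polynomial R) * s).degree = ((X : Polynomial R) • s).degree := by
              rw [smul_eq_C_mul]
          _ ≤ s.degree := degree_smul_le _ _
      have hdeg2 : (C F * (X : Polynomial (Polynomial R)) ^ k).degree < Ft.degree := by
        refine lt_of_le_of_lt (degree_C_mul_X_pow_le _ _) ?_
        rw [hFt_degree]
        exact_mod_cast Nat.lt_succ_of_le hk
      have step3 : (C X * s - C F * (X : Polynomial (Polynomial R)) ^ k) %ₘ Ft =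
          C X * s - C F * X ^ k :=
        (modByMonic_eq_self_iff hFt_monic).mpr
          (lt_of_le_of_lt (degree_sub_le _ _) (max_lt hdeg1 hdeg2))
      rw [step1, step2, step3, coeff_sub, coeff_C_mul, coeff_C_mul, coeff_X_pow,
        if_neg (Nat.ne_of_lt hkr).symm, mul_zero, sub_zero, ih hk, ← pow_succ']
  -- now expand f as a sum of monomials
  have hfnat : f.natDegree ≤ r := natDegree_le_iff_degree_le.mpr hf
  have hmapnat : (f.map (C : R →+* Polynomial R)).natDegree < r + 1 :=
    Nat.lt_succ_of_le (le_trans natDegree_map_le hfnat)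
  have expand : f.map (C : R →+* Polynomial R) =
      ∑ k ∈ range (r + 1), C (C (f.coeff k)) * (X : Polynomial (Polynomial R)) ^ k := by
    conv_lhs => rw [(f.map (C : R →+* Polynomial R)).as_sum_range' (r + 1) hmapnat]
    refine Finset.sum_congr rfl fun k _ => ?_
    rw [coeff_map, C_mul_X_pow_eq_monomial]
  calc ((G * f.map (C : R →+* Polynomial R)) %ₘ Ft).coeff r
      = ((∑ k ∈ range (r + 1), C (C (f.coeff k)) * (G * X ^ k)) %ₘ Ft).coeff r := by
        rw [expand, Finset.mul_sum]
        rw [Finset.sum_congr rfl fun k _ =>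
          (by ring : G * (C (C (f.coeff k)) * X ^ k) = C (C (f.coeff k)) * (G * X ^ k))]
    _ = (∑ k ∈ range (r + 1), C (C (f.coeff k)) * ((G * X ^ k) %ₘ Ft)).coeff r := by
        congr 1
        rw [show ∀ p : Polynomial (Polynomial R), p %ₘ Ft = modByMonicHom Ft p from
          fun p => rfl]
        rw [map_sum]
        refine Finset.sum_congr rfl fun k _ => ?_
        show (C (C (f.coeff k)) * (G * X ^ k)) %ₘ Ft = _
        rw [← smul_eq_C_mul, smul_modByMonic, smul_eq_C_mul]
    _ = ∑ k ∈ range (r + 1), C (f.coeff k) * ((G * X ^ k) %ₘ Ft).coeff r := by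
        rw [finset_sum_coeff]
        exact Finset.sum_congr rfl fun k _ => coeff_C_mul _
    _ = ∑ k ∈ range (r + 1), C (f.coeff k) * (X : Polynomial R) ^ k :=
        Finset.sum_congr rfl fun k hk => by rw [key k (Nat.lt_succ_iff.mp (mem_range.mp hk))]
    _ = f := by
        conv_rhs => rw [f.as_sum_range' (r + 1) (Nat.lt_succ_of_le hfnat)]
        exact Finset.sum_congr rfl fun k _ => C_mul_X_pow_eq_monomial
end

section
/- Fix an integer n ≥ 1 and a real number d, and let H = {x ∈ ℝⁿ : x₁+⋯+xₙ = d} with its subspace topology. A strictly positive matroidal cone is a convex cone C ⊆ ℝⁿ generated by n−1 vectors of the form eⱼ − e_{αⱼ} for j = 2, …, n, where each αⱼ satisfies 1 ≤ αⱼ < j. Let (v₁,C₁), …, (v_m,C_m) be pairwise distinct pairs with each vₗ ∈ H and each Cₗ a strictly positive matroidal cone, and let a₁,…,a_m be integers. If the support of the function ∑_{ℓ=1}^m aₗ·1_{vₗ + Cₗ} : H → ℤ has empty interior in H, then a₁ = ⋯ = a_m = 0. -/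
noncomputable section

/-- The standard basis vector `eᵢ` of `ℝⁿ`. -/
def eVec (n : ℕ) (i : Fin n) : Fin n → ℝ := Pi.single i 1

/-- A strictly positive matroidal cone: the convex cone generated by `n − 1` vectors
`eⱼ − e_{αⱼ}` with `αⱼ < j`, one for each `j ≠ 0` (i.e. `j = 2, …, n` in 1-indexed
notation). -/
def IsStrictlyPositiveMatroidalCone {n : ℕ} (C : Set (Fin n → ℝ)) : Prop :=
  ∃ α : Fin n → Fin n, (∀ j : Fin n, (j : ℕ) ≠ 0 → α j < j) ∧
    C = {x | ∃ c : Fin n → ℝ, (∀ j, 0 ≤ c j) ∧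
      x = ∑ j ∈ Finset.univ.filter (fun j : Fin n => (j : ℕ) ≠ 0),
        c j • (eVec n j - eVec n (α j))}

namespace SPCaux

variable {n : ℕ}

/-- parent map condition -/
def IsTree (β : Fin n → Fin n) : Prop := ∀ j : Fin n, (j : ℕ) ≠ 0 → β j < j

/-- fuelled descendant indicator -/
def descAux (β : Fin n → Fin n) (k : Fin n) : ℕ → Fin n → ℝ
  | 0, j => if j = k then 1 else 0
  | (f+1), j => if j = k then 1 else if (j : ℕ) = 0 then 0 else descAux β k f (β j)

/-- `desc β k j = 1` iff `j` is a `β`-descendant of `k` (or `j = k`), else `0`. -/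
def desc (β : Fin n → Fin n) (k j : Fin n) : ℝ := descAux β k (j : ℕ) j

lemma descAux_congr {β : Fin n → Fin n} (hβ : IsTree β) (k : Fin n) :
    ∀ f (j : Fin n), (j : ℕ) ≤ f → descAux β k f j = desc β k j := by
  intro f
  induction f using Nat.strong_induction_on with
  | _ f ih =>
    intro j hj
    match f, hj with
    | 0, hj =>
      have h0 : (j : ℕ) = 0 := Nat.le_zero.mp hj
      rw [desc, h0]
    | (f+1), hj =>
      rw [desc]
      rcases Nat.eq_zero_or_pos (j : ℕ) with h0 | hpos
      · rw [h0]
        simp only [descAux, h0, if_true]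
      · obtain ⟨m, hm⟩ : ∃ m, (j : ℕ) = m + 1 := ⟨(j:ℕ) - 1, by omega⟩
        rw [hm]
        simp only [descAux]
        by_cases hk : j = k
        · simp [hk]
        · have hne : (j : ℕ) ≠ 0 := by omega
          simp only [hk, if_false, hne, if_false, hm]
          have hβj : (β j : ℕ) < (j : ℕ) := hβ j hne
          rw [ih f (by omega) (β j) (by omega), ih m (by omega) (β j) (by omega)]

lemma desc_eq {β : Fin n → Fin n} (hβ : IsTree β) (k : Fin n) {j : Fin n} (hj : (j : ℕ) ≠ 0) :
    desc β k j = if j = k then 1 else desc β k (β j) := by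
  obtain ⟨m, hm⟩ : ∃ m, (j : ℕ) = m + 1 := ⟨(j:ℕ) - 1, by omega⟩
  rw [desc, hm]
  simp only [descAux]
  by_cases hk : j = k
  · simp [hk]
  · simp only [hk, if_false, hm, hj]
    rw [descAux_congr hβ k m (β j) (by have := hβ j hj; omega)]
    simp [hj]

lemma desc_of_val_zero {β : Fin n → Fin n} (k : Fin n) {j : Fin n} (hj : (j : ℕ) = 0) :
    desc β k j = if j = k then 1 else 0 := by
  rw [desc, hj]; rfl

lemma desc_self {β : Fin n → Fin n} (hβ : IsTree β) (k : Fin n) : desc β k k = 1 := by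
  rcases Nat.eq_zero_or_pos (k : ℕ) with h0 | hpos
  · rw [desc_of_val_zero k h0]; simp
  · rw [desc_eq hβ k (by omega)]; simp

/-- induction principle along the parent map -/
lemma descInduction {β : Fin n → Fin n} (hβ : IsTree β) (P : Fin n → Prop)
    (h : ∀ j : Fin n, ((j : ℕ) ≠ 0 → P (β j)) → P j) : ∀ j, P j := by
  have H : ∀ (f : ℕ) (j : Fin n), (j : ℕ) ≤ f → P j := by
    intro f
    induction f with
    | zero => intro j hj; exact h j (fun h0 => absurd (Nat.le_zero.mp hj) h0)
    | succ f ih =>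
      intro j hj
      exact h j (fun h0 => ih (β j) (by have := hβ j h0; omega))
  exact fun j => H (j : ℕ) j le_rfl

lemma desc_zero_or_one {β : Fin n → Fin n} (hβ : IsTree β) (k : Fin n) :
    ∀ j, desc β k j = 0 ∨ desc β k j = 1 := by
  refine descInduction hβ (fun j => desc β k j = 0 ∨ desc β k j = 1) (fun j ih => ?_)
  rcases Nat.eq_zero_or_pos (j : ℕ) with h0 | hpos
  · rw [desc_of_val_zero k h0]; by_cases hk : j = k <;> simp [hk]
  · rw [desc_eq hβ k (by omega)]
    by_cases hk : j = k
    · simp [hk]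
    · simpa [hk] using ih (by omega)

lemma desc_nonneg {β : Fin n → Fin n} (hβ : IsTree β) (k j : Fin n) : 0 ≤ desc β k j := by
  rcases desc_zero_or_one hβ k j with h | h <;> rw [h] <;> norm_num

lemma val_le_of_desc_ne_zero {β : Fin n → Fin n} (hβ : IsTree β) (k : Fin n) :
    ∀ j, desc β k j ≠ 0 → (k : ℕ) ≤ (j : ℕ) := by
  refine descInduction hβ (fun j => desc β k j ≠ 0 → (k : ℕ) ≤ (j : ℕ)) (fun j ih hne => ?_)
  rcases Nat.eq_zero_or_pos (j : ℕ) with h0 | hpos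
  · rw [desc_of_val_zero k h0] at hne
    by_cases hk : j = k
    · rw [hk]
    · simp [hk] at hne
  · rw [desc_eq hβ k (by omega)] at hne
    by_cases hk : j = k
    · subst hk; omega
    · simp only [hk, if_false] at hne
      have := ih (by omega) hne
      have := hβ j (by omega)
      omega

lemma desc_rec' {β : Fin n → Fin n} (hβ : IsTree β) (k : Fin n) {j : Fin n} (hj : (j : ℕ) ≠ 0) :
    desc β k j = (if j = k then 1 else 0) + desc β k (β j) := by
  by_cases hk : j = k
  · subst hk
    have hz : desc β j (β j) = 0 := by
      by_contra hne
      have := val_le_of_desc_ne_zero hβ j (β j) hne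
      have := hβ j hj
      omega
    rw [desc_self hβ, hz]; simp
  · rw [desc_eq hβ k hj]; simp [hk]

lemma desc_trans {β : Fin n → Fin n} (hβ : IsTree β) (a b : Fin n)
    (hab : desc β a b = 1) : ∀ j, desc β b j = 1 → desc β a j = 1 := by
  refine descInduction hβ (fun j => desc β b j = 1 → desc β a j = 1) (fun j ih hbj => ?_)
  by_cases hjb : j = b
  · subst hjb; exact hab
  rcases Nat.eq_zero_or_pos (j : ℕ) with h0 | hpos
  · rw [desc_of_val_zero b h0] at hbj; simp [hjb] at hbj
  · have hj0 : (j : ℕ) ≠ 0 := by omega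
    rw [desc_eq hβ b hj0] at hbj
    simp only [hjb, if_false] at hbj
    have := ih hj0 hbj
    rw [desc_eq hβ a hj0]
    by_cases hja : j = a <;> simp [hja, this]

lemma desc_comparable {β : Fin n → Fin n} (hβ : IsTree β) (a b : Fin n) :
    ∀ j, desc β a j = 1 → desc β b j = 1 → desc β a b = 1 ∨ desc β b a = 1 := by
  refine descInduction hβ (fun j => desc β a j = 1 → desc β b j = 1 →
    desc β a b = 1 ∨ desc β b a = 1) (fun j ih haj hbj => ?_)
  by_cases hja : j = a
  · right; rw [← hja]; exact hbj
  by_cases hjb : j = b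
  · left; rw [← hjb]; exact haj
  rcases Nat.eq_zero_or_pos (j : ℕ) with h0 | hpos
  · rw [desc_of_val_zero a h0] at haj; simp [hja] at haj
  · have hj0 : (j : ℕ) ≠ 0 := by omega
    rw [desc_eq hβ a hj0] at haj
    rw [desc_eq hβ b hj0] at hbj
    simp only [hja, hjb, if_false] at haj hbj
    exact ih hj0 haj hbj

/-- the index set `{1, …, n-1}` -/
def J (n : ℕ) : Finset (Fin n) := Finset.univ.filter (fun j : Fin n => (j : ℕ) ≠ 0)

def gVec (β : Fin n → Fin n) (j : Fin n) : Fin n → ℝ := eVec n j - eVec n (β j)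

/-- the `k`-th subtree-sum functional -/
def Sfun (β : Fin n → Fin n) (k : Fin n) (x : Fin n → ℝ) : ℝ := ∑ j, desc β k j * x j

lemma Sfun_sub (β : Fin n → Fin n) (k : Fin n) (x y : Fin n → ℝ) :
    Sfun β k (x - y) = Sfun β k x - Sfun β k y := by
  simp [Sfun, mul_sub, Finset.sum_sub_distrib]

lemma Sfun_add (β : Fin n → Fin n) (k : Fin n) (x y : Fin n → ℝ) :
    Sfun β k (x + y) = Sfun β k x + Sfun β k y := by
  simp [Sfun, mul_add, Finset.sum_add_distrib]

lemma Sfun_smul (β : Fin n → Fin n) (k : Fin n) (c : ℝ) (x : Fin n → ℝ) :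
    Sfun β k (c • x) = c * Sfun β k x := by
  simp only [Sfun, Pi.smul_apply, smul_eq_mul, Finset.mul_sum]
  congr 1; funext j; ring

lemma Sfun_finsum {ι : Type*} (β : Fin n → Fin n) (k : Fin n) (s : Finset ι) (w : ι → Fin n → ℝ) :
    Sfun β k (∑ i ∈ s, w i) = ∑ i ∈ s, Sfun β k (w i) := by
  classical
  induction s using Finset.induction with
  | empty => simp [Sfun]
  | insert _ _ hni ih =>
    rw [Finset.sum_insert hni, Finset.sum_insert hni, Sfun_add, ih]

lemma Sfun_eVec (β : Fin n → Fin n) (k m : Fin n) : Sfun β k (eVec n m) = desc β k m := by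
  simp [Sfun, eVec, Pi.single_apply, mul_ite, Finset.sum_ite_eq']

lemma Sfun_gVec (β α : Fin n → Fin n) (k j : Fin n) :
    Sfun β k (gVec α j) = desc β k j - desc β k (α j) := by
  rw [gVec, Sfun_sub, Sfun_eVec, Sfun_eVec]

lemma Sfun_gVec_self {β : Fin n → Fin n} (hβ : IsTree β) {k j : Fin n}
    (hj : (j : ℕ) ≠ 0) : Sfun β k (gVec β j) = if j = k then 1 else 0 := by
  rw [Sfun_gVec, desc_rec' hβ k hj]; ring

lemma Sfun_combo {β : Fin n → Fin n} (hβ : IsTree β) (c : Fin n → ℝ) {k : Fin n}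
    (hk : k ∈ J n) :
    Sfun β k (∑ j ∈ J n, c j • gVec β j) = c k := by
  rw [Sfun_finsum]
  have : ∀ j ∈ J n, Sfun β k (c j • gVec β j) = if j = k then c j else 0 := by
    intro j hj
    rw [Sfun_smul, Sfun_gVec_self hβ (by simpa [J] using hj)]
    by_cases h : j = k <;> simp [h]
  rw [Finset.sum_congr rfl this, Finset.sum_ite_eq' (J n)]
  simp [hk]

lemma sum_eVec (m : Fin n) : ∑ i, eVec n m i = 1 := by
  simp [eVec, Finset.sum_pi_single]

lemma sum_gVec (β : Fin n → Fin n) (j : Fin n) : ∑ i, gVec β j i = 0 := by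
  simp [gVec, Finset.sum_sub_distrib, sum_eVec]

lemma sum_combo (β : Fin n → Fin n) (c : Fin n → ℝ) :
    ∑ i, (∑ j ∈ J n, c j • gVec β j) i = 0 := by
  simp only [Finset.sum_apply]
  rw [Finset.sum_comm]
  refine Finset.sum_eq_zero (fun j _ => ?_)
  simp only [Pi.smul_apply, smul_eq_mul, ← Finset.mul_sum, sum_gVec, mul_zero]


/-- descendant-or-root indicator: subtree of the root `0` is everything -/
def descE (β : Fin n → Fin n) (i j : Fin n) : ℝ := if (i : ℕ) = 0 then 1 else desc β i j

lemma TK {β : Fin n → Fin n} (hβ : IsTree β) (i : Fin n) :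
    ∀ j : Fin n, (∑ k ∈ (J n).filter (fun k => β k = i), desc β k j) =
      if (j : ℕ) = 0 then 0 else descE β i (β j) := by
  refine descInduction hβ _ (fun j ih => ?_)
  rcases Nat.eq_zero_or_pos (j : ℕ) with h0 | hpos
  · rw [if_pos h0]
    refine Finset.sum_eq_zero (fun k hk => ?_)
    have hk' : (k : ℕ) ≠ 0 := by
      simp only [J, Finset.mem_filter] at hk; exact hk.1.2
    rw [desc_of_val_zero k h0, if_neg (by intro h; rw [h] at h0; exact hk' h0)]
  · have hj0 : (j : ℕ) ≠ 0 := by omega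
    rw [if_neg hj0]
    have step : ∀ k ∈ (J n).filter (fun k => β k = i), desc β k j
        = (if j = k then 1 else 0) + desc β k (β j) :=
      fun k _ => desc_rec' hβ k hj0
    rw [Finset.sum_congr rfl step, Finset.sum_add_distrib, ih hj0]
    have hfirst : (∑ k ∈ (J n).filter (fun k => β k = i), if j = k then 1 else (0:ℝ))
        = if β j = i then 1 else 0 := by
      simp only [Finset.sum_ite_eq (((J n).filter (fun k => β k = i))) j (fun _ => (1:ℝ))]
      by_cases hmem : β j = i
      · rw [if_pos (by simp [J, Finset.mem_filter, hj0, hmem]), if_pos hmem]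
      · rw [if_neg (by simp [J, Finset.mem_filter, hj0, hmem]), if_neg hmem]
    rw [hfirst]
    rcases Nat.eq_zero_or_pos ((β j : Fin n) : ℕ) with hb0 | hbpos
    · rw [if_pos hb0]
      unfold descE
      by_cases hi : (i : ℕ) = 0
      · rw [if_pos hi, if_pos (Fin.ext (by omega) : β j = i)]; norm_num
      · rw [if_neg hi, desc_of_val_zero i hb0]; norm_num
    · have hb0 : ((β j : Fin n) : ℕ) ≠ 0 := by omega
      rw [if_neg hb0]
      by_cases hi : (i : ℕ) = 0
      · have hne : β j ≠ i := fun h => hb0 (by rw [h]; exact hi)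
        simp [descE, hi, hne]
      · simp only [descE, hi, if_false]
        rw [desc_rec' hβ i hb0]

/-- Every vector with coordinate sum zero is the canonical combination of the `gVec β` basis. -/
lemma rep {β : Fin n → Fin n} (hβ : IsTree β) (x : Fin n → ℝ) (hx : ∑ i, x i = 0) :
    x = ∑ k ∈ J n, Sfun β k x • gVec β k := by
  funext i
  rw [Finset.sum_apply]
  have hg : ∀ k, (Sfun β k x • gVec β k) i
      = Sfun β k x * (if i = k then 1 else 0) - Sfun β k x * (if i = β k then 1 else 0) := by
    intro k
    simp [gVec, eVec, Pi.single_apply, mul_sub]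
  rw [Finset.sum_congr rfl (fun k _ => hg k), Finset.sum_sub_distrib]
  have hfirst : (∑ k ∈ J n, Sfun β k x * (if i = k then 1 else 0))
      = if i ∈ J n then Sfun β i x else 0 := by
    rw [← Finset.sum_ite_eq (J n) i (fun k => Sfun β k x)]
    exact Finset.sum_congr rfl (fun k _ => by by_cases h : i = k <;> simp [h, eq_comm])
  have hsecond : (∑ k ∈ J n, Sfun β k x * (if i = β k then 1 else 0))
      = ∑ j ∈ J n, descE β i (β j) * x j := by
    have e1 : (∑ k ∈ J n, Sfun β k x * (if i = β k then 1 else 0))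
        = ∑ k ∈ (J n).filter (fun k => β k = i), Sfun β k x := by
      rw [Finset.sum_filter]
      refine Finset.sum_congr rfl (fun k _ => ?_)
      by_cases h : β k = i
      · simp [h]
      · rw [if_neg h, if_neg (fun hh => h hh.symm)]; ring
    rw [e1]
    have e2 : (∑ k ∈ (J n).filter (fun k => β k = i), Sfun β k x)
        = ∑ j : Fin n, (∑ k ∈ (J n).filter (fun k => β k = i), desc β k j) * x j := by
      unfold Sfun
      rw [Finset.sum_comm]
      exact Finset.sum_congr rfl (fun j _ => by rw [Finset.sum_mul])
    rw [e2]
    have e3 : ∀ j : Fin n,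
        (∑ k ∈ (J n).filter (fun k => β k = i), desc β k j) * x j
        = if (j : ℕ) ≠ 0 then descE β i (β j) * x j else 0 := by
      intro j
      rw [TK hβ i j]
      by_cases h : (j : ℕ) = 0 <;> simp [h]
    rw [Finset.sum_congr rfl (fun j _ => e3 j), ← Finset.sum_filter]
    rfl
  rw [hfirst, hsecond]
  by_cases hi : (i : ℕ) = 0
  · have hiJ : i ∉ J n := by simp [J, hi]
    rw [if_neg hiJ]
    have : ∀ j ∈ J n, descE β i (β j) * x j = x j := fun j _ => by simp [descE, hi]
    rw [Finset.sum_congr rfl this]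
    have hJe : J n = Finset.univ.erase i := by
      ext j
      simp only [J, Finset.mem_filter, Finset.mem_univ, Finset.mem_erase, true_and, and_true]
      constructor
      · intro h hji; rw [hji] at h; exact h hi
      · intro h hj0; exact h (Fin.ext (by omega))
    rw [hJe]
    have := Finset.sum_erase_add Finset.univ x (Finset.mem_univ i)
    rw [hx] at this
    linarith
  · have hiJ : i ∈ J n := by simp [J, hi]
    rw [if_pos hiJ]
    have hdesc0 : ∀ j : Fin n, (j : ℕ) = 0 → desc β i j * x j = 0 := by
      intro j hj
      rw [desc_of_val_zero i hj, if_neg (fun h => hi (by rw [← h]; exact hj))]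
      ring
    have hSi : Sfun β i x = ∑ j ∈ J n, desc β i j * x j := by
      unfold Sfun
      rw [← Finset.sum_subset (Finset.subset_univ (J n))]
      intro j _ hjJ
      have : (j : ℕ) = 0 := by
        by_contra h
        exact hjJ (by simp [J, h])
      exact hdesc0 j this
    rw [hSi]
    have : ∀ j ∈ J n, descE β i (β j) * x j = desc β i (β j) * x j :=
      fun j _ => by simp [descE, hi]
    rw [Finset.sum_congr rfl this, ← Finset.sum_sub_distrib]
    have e4 : ∀ j ∈ J n, desc β i j * x j - desc β i (β j) * x j
        = (if j = i then 1 else 0) * x j := by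
      intro j hj
      rw [desc_rec' hβ i (by simpa [J] using hj)]
      ring
    rw [Finset.sum_congr rfl e4]
    have e5 : ∀ j ∈ J n, (if j = i then (1:ℝ) else 0) * x j = if j = i then x j else 0 :=
      fun j _ => by by_cases h : j = i <;> simp [h]
    rw [Finset.sum_congr rfl e5, Finset.sum_ite_eq' (J n) i x, if_pos hiJ]

def coneOf (α : Fin n → Fin n) : Set (Fin n → ℝ) :=
  {x | ∃ c : Fin n → ℝ, (∀ j, 0 ≤ c j) ∧ x = ∑ j ∈ J n, c j • gVec α j}

lemma coneOf_coords {α : Fin n → Fin n} (hα : IsTree α) {x : Fin n → ℝ}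
    (hx : x ∈ coneOf α) {k : Fin n} (hk : k ∈ J n) : 0 ≤ Sfun α k x := by
  obtain ⟨c, hc, rfl⟩ := hx
  rw [Sfun_combo hα c hk]
  exact hc k

lemma coneOf_sum {α : Fin n → Fin n} {x : Fin n → ℝ} (hx : x ∈ coneOf α) :
    ∑ i, x i = 0 := by
  obtain ⟨c, _, rfl⟩ := hx
  exact sum_combo α c

lemma mem_coneOf {α : Fin n → Fin n} (hα : IsTree α) {x : Fin n → ℝ}
    (hx0 : ∑ i, x i = 0) (h : ∀ k ∈ J n, 0 ≤ Sfun α k x) : x ∈ coneOf α := by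
  classical
  refine ⟨fun k => if k ∈ J n then Sfun α k x else 0, fun k => ?_, ?_⟩
  · by_cases hk : k ∈ J n
    · simpa [hk] using h k hk
    · simp [hk]
  · conv_lhs => rw [rep hα x hx0]
    exact Finset.sum_congr rfl (fun k hk => by simp [hk])

def phi (x : Fin n → ℝ) : ℝ := ∑ i : Fin n, ((i : ℕ) : ℝ) * x i

lemma phi_sub (x y : Fin n → ℝ) : phi (x - y) = phi x - phi y := by
  simp [phi, mul_sub, Finset.sum_sub_distrib]

lemma phi_eVec (m : Fin n) : phi (eVec n m) = (m : ℕ) := by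
  simp [phi, eVec, Pi.single_apply, mul_ite, Finset.sum_ite_eq']

lemma phi_gVec (β : Fin n → Fin n) (j : Fin n) :
    phi (gVec β j) = ((j : ℕ) : ℝ) - ((β j : ℕ) : ℝ) := by
  rw [gVec, phi_sub, phi_eVec, phi_eVec]

lemma phi_combo (β : Fin n → Fin n) (c : Fin n → ℝ) :
    phi (∑ j ∈ J n, c j • gVec β j)
      = ∑ j ∈ J n, c j * (((j : ℕ) : ℝ) - ((β j : ℕ) : ℝ)) := by
  unfold phi
  simp only [Finset.sum_apply, Pi.smul_apply, smul_eq_mul, Finset.mul_sum]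
  rw [Finset.sum_comm]
  refine Finset.sum_congr rfl (fun j hj => ?_)
  have : ∀ i : Fin n, ((i : ℕ) : ℝ) * (c j * gVec β j i) = c j * (((i : ℕ) : ℝ) * gVec β j i) := by
    intro i; ring
  rw [Finset.sum_congr rfl (fun i _ => this i), ← Finset.mul_sum]
  congr 1
  exact phi_gVec β j

lemma coneOf_phi_nonneg {β : Fin n → Fin n} (hβ : IsTree β) {x : Fin n → ℝ}
    (hx : x ∈ coneOf β) : 0 ≤ phi x := by
  obtain ⟨c, hc, rfl⟩ := hx
  rw [phi_combo]
  refine Finset.sum_nonneg (fun j hj => ?_)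
  have hj0 : (j : ℕ) ≠ 0 := by simpa [J] using hj
  have := hβ j hj0
  have hlt : ((β j : ℕ) : ℝ) < ((j : ℕ) : ℝ) := by exact_mod_cast this
  exact mul_nonneg (hc j) (by linarith)

lemma coneOf_phi_eq_zero {β : Fin n → Fin n} (hβ : IsTree β) {x : Fin n → ℝ}
    (hx : x ∈ coneOf β) (h0 : phi x = 0) : x = 0 := by
  obtain ⟨c, hc, rfl⟩ := hx
  rw [phi_combo] at h0
  have hterm : ∀ j ∈ J n, 0 ≤ c j * (((j : ℕ) : ℝ) - ((β j : ℕ) : ℝ)) := by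
    intro j hj
    have hj0 : (j : ℕ) ≠ 0 := by simpa [J] using hj
    have := hβ j hj0
    have hlt : ((β j : ℕ) : ℝ) < ((j : ℕ) : ℝ) := by exact_mod_cast this
    exact mul_nonneg (hc j) (by linarith)
  have hz := (Finset.sum_eq_zero_iff_of_nonneg hterm).mp h0
  have hc0 : ∀ j ∈ J n, c j = 0 := by
    intro j hj
    have hj0 : (j : ℕ) ≠ 0 := by simpa [J] using hj
    have := hβ j hj0
    have hlt : ((β j : ℕ) : ℝ) < ((j : ℕ) : ℝ) := by exact_mod_cast this
    have := hz j hj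
    rcases mul_eq_zero.mp this with h | h
    · exact h
    · linarith
  refine Finset.sum_eq_zero (fun j hj => ?_)
  rw [hc0 j hj, zero_smul]

lemma geom_lt {M : ℝ} (hM : 2 ≤ M) : ∀ e : ℕ, ∑ i ∈ Finset.range e, M ^ i < M ^ e := by
  intro e
  induction e with
  | zero => simp
  | succ e ih =>
    rw [Finset.sum_range_succ, pow_succ]
    have hpos : (0:ℝ) < M ^ e := pow_pos (by linarith) e
    nlinarith

lemma exists_t {ι : Type*} (s : Finset ι) (A B : ι → ℝ) (h : ∀ l ∈ s, A l < 0) :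
    ∃ t : ℝ, 0 < t ∧ ∀ l ∈ s, A l + t * B l < 0 := by
  classical
  induction s using Finset.induction with
  | empty => exact ⟨1, one_pos, fun l hl => absurd hl (Finset.notMem_empty l)⟩
  | @insert a s ha ih =>
    obtain ⟨t', ht', htl⟩ := ih (fun l hl => h l (Finset.mem_insert_of_mem hl))
    have hA : A a < 0 := h a (Finset.mem_insert_self a s)
    refine ⟨min t' (-(A a) / (|B a| + 1)), ?_, ?_⟩
    · exact lt_min ht' (div_pos (by linarith) (by positivity))
    · intro l hl
      set t := min t' (-(A a) / (|B a| + 1)) with htdef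
      have ht0 : 0 < t := lt_min ht' (div_pos (by linarith) (by positivity))
      have hAl : A l < 0 := h l hl
      rcases Finset.mem_insert.mp hl with rfl | hls
      · have h1 : t ≤ -(A l) / (|B l| + 1) := min_le_right _ _
        have h2 : t * B l ≤ t * |B l| := by
          have := le_abs_self (B l)
          nlinarith
        have h3 : t * |B l| ≤ (-(A l) / (|B l| + 1)) * |B l| := by
          have := abs_nonneg (B l)
          nlinarith
        have h4 : (-(A l) / (|B l| + 1)) * |B l| < -(A l) := by
          have habs := abs_nonneg (B l)
          rw [div_mul_eq_mul_div, div_lt_iff₀ (by positivity)]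
          nlinarith
        linarith
      · have hl' := htl l hls
        have htt' : t ≤ t' := min_le_left _ _
        rcases le_or_gt 0 (B l) with hB | hB
        · nlinarith [mul_nonneg (sub_nonneg.mpr htt') hB]
        · nlinarith [mul_pos ht0 (neg_pos.mpr hB)]

lemma e_inj (α : Fin n → Fin n) (j j' : Fin n)
    (h : n * (α j : ℕ) + (j : ℕ) = n * (α j' : ℕ) + (j' : ℕ)) : j = j' := by
  have h1 : (n * (α j : ℕ) + (j : ℕ)) % n = (j : ℕ) % n := by
    rw [Nat.mul_add_mod]
  have h2 : (n * (α j' : ℕ) + (j' : ℕ)) % n = (j' : ℕ) % n := by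
    rw [Nat.mul_add_mod]
  have hj : (j : ℕ) % n = (j : ℕ) := Nat.mod_eq_of_lt j.isLt
  have hj' : (j' : ℕ) % n = (j' : ℕ) := Nat.mod_eq_of_lt j'.isLt
  have : (j : ℕ) = (j' : ℕ) := by rw [← hj, ← hj', ← h1, ← h2, h]
  exact Fin.ext this

/-- the magic interior point of `coneOf α`: its coefficient on the generator `gⱼ` is
`(n+1) ^ (n·αⱼ + j)`, ranking generators primarily by parent index. -/
def uPt (α : Fin n → Fin n) : Fin n → ℝ :=
  ∑ j ∈ J n, ((n + 1 : ℝ) ^ (n * (α j : ℕ) + (j : ℕ))) • gVec α j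

/-- Key combinatorial lemma: if all `β`-subtree sums of `uPt α` are nonnegative, then every
`α`-parent is a `β`-ancestor, i.e. `coneOf α ⊆ coneOf β`. -/
lemma magic (hn : 0 < n) {α β : Fin n → Fin n} (hα : IsTree α) (hβ : IsTree β)
    (h : ∀ k ∈ J n, 0 ≤ Sfun β k (uPt α)) :
    ∀ j ∈ J n, ∀ k ∈ J n, desc β k (α j) ≤ desc β k j := by
  classical
  set M : ℝ := (n + 1 : ℝ) with hMdef
  have hM : 2 ≤ M := by
    have : (1:ℝ) ≤ (n:ℝ) := by exact_mod_cast hn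
    simp only [hMdef]; linarith
  set e : Fin n → ℕ := fun j => n * (α j : ℕ) + (j : ℕ) with hedef
  set cc : Fin n → ℝ := fun j => M ^ e j with hccdef
  have hccpos : ∀ j, 0 < cc j := fun j => pow_pos (by linarith) _
  by_contra hcon
  push_neg at hcon
  obtain ⟨j₀, hj₀J, k₀, hk₀J, hlt⟩ := hcon
  -- the set of violated edges
  set Viol : Finset (Fin n) :=
    (J n).filter (fun j => desc β (α j) j = 0 ∧ (α j : ℕ) ≠ 0) with hVdef
  have hbridge : j₀ ∈ Viol := by
    have h01j := desc_zero_or_one hβ k₀ j₀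
    have h01a := desc_zero_or_one hβ k₀ (α j₀)
    have hd1 : desc β k₀ (α j₀) = 1 ∧ desc β k₀ j₀ = 0 := by
      rcases h01j with h1 | h1 <;> rcases h01a with h2 | h2 <;>
        constructor <;> first | assumption | linarith
    have hk₀0 : (k₀ : ℕ) ≠ 0 := by simpa [J] using hk₀J
    have ha0 : (α j₀ : ℕ) ≠ 0 := by
      intro hz
      rw [desc_of_val_zero k₀ hz] at hd1
      rcases hd1 with ⟨hd1, _⟩
      by_cases hke : α j₀ = k₀
      · exact hk₀0 (by rw [← hke]; exact hz)
      · rw [if_neg hke] at hd1; norm_num at hd1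
    have hdz : desc β (α j₀) j₀ = 0 := by
      rcases desc_zero_or_one hβ (α j₀) j₀ with hz | ho
      · exact hz
      · have := desc_trans hβ k₀ (α j₀) hd1.1 j₀ ho
        rw [this] at hd1
        norm_num at hd1
    simp only [hVdef, Finset.mem_filter]
    exact ⟨hj₀J, hdz, ha0⟩
  obtain ⟨js, hjsV, hmax⟩ := Finset.exists_max_image Viol e ⟨j₀, hbridge⟩
  have hjsV' := hjsV
  simp only [hVdef, Finset.mem_filter] at hjsV'
  obtain ⟨hjsJ, hds0, has0⟩ := hjsV'
  set ks : Fin n := α js with hksdef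
  have hksJ : ks ∈ J n := by simp [J, hksdef, has0]; exact has0
  -- expand the subtree sum at ks
  have hexp : Sfun β ks (uPt α)
      = ∑ j ∈ J n, cc j * (desc β ks j - desc β ks (α j)) := by
    rw [uPt, Sfun_finsum]
    exact Finset.sum_congr rfl (fun j _ => by rw [Sfun_smul, Sfun_gVec])
  have hsplit : (∑ j ∈ J n, cc j * (desc β ks j - desc β ks (α j)))
      = (∑ j ∈ (J n).erase js, cc j * (desc β ks j - desc β ks (α j)))
        + cc js * (desc β ks js - desc β ks (α js)) :=
    (Finset.sum_erase_add (J n) (fun j => cc j * (desc β ks j - desc β ks (α j))) hjsJ).symm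
  have hterm_js : cc js * (desc β ks js - desc β ks (α js)) = -(cc js) := by
    rw [← hksdef, hds0, desc_self hβ]; ring
  -- the positive-term set
  set Q : Finset (Fin n) := ((J n).erase js).filter
    (fun j => desc β ks j = 1 ∧ desc β ks (α j) = 0) with hQdef
  have hbound : (∑ j ∈ (J n).erase js, cc j * (desc β ks j - desc β ks (α j)))
      ≤ ∑ j ∈ Q, cc j := by
    rw [hQdef, Finset.sum_filter]
    refine Finset.sum_le_sum (fun j hj => ?_)
    by_cases hcnd : desc β ks j = 1 ∧ desc β ks (α j) = 0
    · rw [if_pos hcnd, hcnd.1, hcnd.2]; ring_nf; exact le_refl _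
    · rw [if_neg hcnd]
      have hd : desc β ks j - desc β ks (α j) ≤ 0 := by
        rcases desc_zero_or_one hβ ks j with h1 | h1 <;>
          rcases desc_zero_or_one hβ ks (α j) with h2 | h2 <;>
          rw [h1, h2] <;> norm_num
        exact absurd ⟨h1, h2⟩ hcnd
      nlinarith [hccpos j]
  -- every positive term has strictly smaller rank
  have hQlt : ∀ j ∈ Q, e j < e js := by
    intro j hj
    simp only [hQdef, Finset.mem_filter, Finset.mem_erase] at hj
    obtain ⟨⟨hjne, hjJ⟩, hd1, hd2⟩ := hj
    have hjn : (j : ℕ) < n := j.isLt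
    have has1 : 1 ≤ (α js : ℕ) := by omega
    by_cases ha0 : (α j : ℕ) = 0
    · have h1 : n ≤ n * (α js : ℕ) := Nat.le_mul_of_pos_right n (by omega)
      simp only [hedef, ha0]
      omega
    · by_cases hV : j ∈ Viol
      · have hle := hmax j hV
        have hne : e j ≠ e js := fun hh => hjne (e_inj α j js hh)
        omega
      · have hdaj : desc β (α j) j = 1 := by
          rcases desc_zero_or_one hβ (α j) j with hz | ho
          · exfalso
            exact hV (by simp only [hVdef, Finset.mem_filter]; exact ⟨hjJ, hz, ha0⟩)
          · exact ho
        rcases desc_comparable hβ ks (α j) j hd1 hdaj with hc | hc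
        · rw [hc] at hd2; norm_num at hd2
        · have hvle : (α j : ℕ) ≤ (ks : ℕ) := val_le_of_desc_ne_zero hβ (α j) ks (by rw [hc]; norm_num)
          have hne : α j ≠ ks := by
            intro hh
            rw [hh, desc_self hβ] at hd2
            norm_num at hd2
          have hvlt : (α j : ℕ) < (α js : ℕ) := by
            rw [hksdef] at hne hvle
            exact lt_of_le_of_ne hvle (fun hh => hne (Fin.ext hh))
          have h2 : n * ((α j : ℕ) + 1) ≤ n * (α js : ℕ) := Nat.mul_le_mul_left n (by omega)
          rw [Nat.mul_succ] at h2
          simp only [hedef]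
          omega
  -- geometric bound
  have hsum : (∑ j ∈ Q, cc j) < cc js := by
    have himg : ∀ i ∈ Q.image e, i ∈ Finset.range (e js) := by
      intro i hi
      obtain ⟨j, hj, rfl⟩ := Finset.mem_image.mp hi
      exact Finset.mem_range.mpr (hQlt j hj)
    calc ∑ j ∈ Q, cc j = ∑ i ∈ Q.image e, M ^ i := by
          rw [Finset.sum_image (fun x _ y _ h => e_inj α x y h)]
      _ ≤ ∑ i ∈ Finset.range (e js), M ^ i := by
          refine Finset.sum_le_sum_of_subset_of_nonneg (fun i hi => himg i hi) ?_
          intro i _ _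
          exact le_of_lt (pow_pos (by linarith) i)
      _ < M ^ (e js) := geom_lt hM _
  have hfinal := h ks hksJ
  rw [hexp, hsplit, hterm_js] at hfinal
  linarith

lemma contSfun {d : ℝ} (β : Fin n → Fin n) (k : Fin n) (w : Fin n → ℝ) :
    Continuous (fun y : {y : Fin n → ℝ // ∑ i, y i = d} =>
      Sfun β k ((y : Fin n → ℝ) - w)) := by
  unfold Sfun
  refine continuous_finset_sum _ (fun j _ => ?_)
  exact (continuous_const.mul (((continuous_apply j).comp continuous_subtype_val).sub
    continuous_const))

end SPCaux

open SPCaux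

/-- Translates of strictly positive matroidal cones satisfy no nontrivial additive
relations: if the support of `∑ aₗ·1_{vₗ + Cₗ}` has empty interior in the hyperplane
`H = {∑ xᵢ = d}`, then all `aₗ` vanish. -/
theorem strictlyPositiveCone_indicators_independent {n : ℕ} (hn : 0 < n) (d : ℝ)
    {m : ℕ} (v : Fin m → (Fin n → ℝ)) (C : Fin m → Set (Fin n → ℝ)) (a : Fin m → ℤ)
    (hv : ∀ l, ∑ i, v l i = d)
    (hC : ∀ l, IsStrictlyPositiveMatroidalCone (C l))
    (hdistinct : Function.Injective fun l => (v l, C l))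
    (hsupp : interior {x : {y : Fin n → ℝ // ∑ i, y i = d} |
      (∑ l, a l * ((fun w => v l + w) '' C l).indicator (fun _ => (1 : ℤ)) (x : Fin n → ℝ))
        ≠ 0} = ∅) :
    ∀ l, a l = 0 := by
  classical
  by_contra hcontra
  push_neg at hcontra
  obtain ⟨l₁, hl₁⟩ := hcontra
  have htree : ∀ l, ∃ α : Fin n → Fin n, IsTree α ∧ C l = coneOf α := by
    intro l
    obtain ⟨α, h1, h2⟩ := hC l
    exact ⟨α, h1, h2⟩
  choose β hβtree hβC using htree
  set S : Finset (Fin m) := Finset.univ.filter (fun l => a l ≠ 0) with hSdef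
  have hSmem : ∀ l, l ∈ S ↔ a l ≠ 0 := by intro l; simp [hSdef]
  have hSne : S.Nonempty := ⟨l₁, (hSmem l₁).mpr hl₁⟩
  obtain ⟨l₀, hl₀S, hmin⟩ := Finset.exists_min_image S (fun l => phi (v l)) hSne
  set v₀ : Fin n → ℝ := v l₀ with hv₀def
  set T : Finset (Fin m) := S.filter (fun l => v l = v₀) with hTdef
  have hTmem : ∀ l, l ∈ T ↔ (a l ≠ 0 ∧ v l = v₀) := by
    intro l; simp [hTdef, hSmem, hSdef]
  have hl₀T : l₀ ∈ T := (hTmem l₀).mpr ⟨(hSmem l₀).mp hl₀S, rfl⟩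
  obtain ⟨ls, hlsT, hlsmax⟩ := Set.Finite.exists_maximalFor C (↑T : Set (Fin m))
    T.finite_toSet ⟨l₀, hl₀T⟩
  have hlsT' := (hTmem ls).mp (by exact_mod_cast hlsT)
  -- certificates against cones with a different apex
  have hcert1 : ∀ l : Fin m, ∃ k : Fin n,
      (l ∈ S ∧ l ∉ T) → (k ∈ J n ∧ Sfun (β l) k (v₀ - v l) < 0) := by
    intro l
    by_cases hl : l ∈ S ∧ l ∉ T
    · by_contra hno
      push_neg at hno
      have hge : ∀ k ∈ J n, 0 ≤ Sfun (β l) k (v₀ - v l) := by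
        intro k hk
        exact (hno k).2 hk
      have hsum0 : ∑ i, (v₀ - v l) i = 0 := by
        simp only [Pi.sub_apply, Finset.sum_sub_distrib]
        rw [hv₀def, hv l₀, hv l, sub_self]
      have hmem := mem_coneOf (hβtree l) hsum0 hge
      have hphi1 : 0 ≤ phi (v₀ - v l) := coneOf_phi_nonneg (hβtree l) hmem
      have hphi2 : phi (v₀ - v l) = phi v₀ - phi (v l) := phi_sub _ _
      have hphile : phi v₀ ≤ phi (v l) := hmin l hl.1
      have hphi0 : phi (v₀ - v l) = 0 := by rw [hphi2]; linarith
      have := coneOf_phi_eq_zero (hβtree l) hmem hphi0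
      have hveq : v l = v₀ := by
        have := sub_eq_zero.mp this
        exact this.symm
      exact hl.2 ((hTmem l).mpr ⟨(hSmem l).mp hl.1, hveq⟩)
    · exact ⟨⟨0, hn⟩, fun h => absurd h hl⟩
  choose κ₁ hκ₁ using hcert1
  -- certificates against cones with the same apex
  have hcert2 : ∀ l : Fin m, ∃ k : Fin n,
      (l ∈ T ∧ l ≠ ls) → (k ∈ J n ∧ Sfun (β l) k (uPt (β ls)) < 0) := by
    intro l
    by_cases hl : l ∈ T ∧ l ≠ ls
    · by_contra hno
      push_neg at hno
      have hge : ∀ k ∈ J n, 0 ≤ Sfun (β l) k (uPt (β ls)) := by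
        intro k hk
        exact (hno k).2 hk
      have hdesc := magic hn (hβtree ls) (hβtree l) hge
      -- C ls ⊆ C l
      have hsub : C ls ⊆ C l := by
        rw [hβC ls, hβC l]
        rintro x ⟨c, hc, rfl⟩
        refine mem_coneOf (hβtree l) (sum_combo _ _) (fun k hk => ?_)
        rw [Sfun_finsum]
        refine Finset.sum_nonneg (fun j hj => ?_)
        rw [Sfun_smul, Sfun_gVec]
        have := hdesc j hj k hk
        have hcj := hc j
        nlinarith
      have hCeq : C ls = C l := le_antisymm hsub (hlsmax (by exact_mod_cast hl.1) hsub)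
      have hveq : v l = v ls := by
        rw [((hTmem l).mp hl.1).2, hlsT'.2]
      have : l = ls := hdistinct (by simp [Prod.ext_iff, hveq, hCeq.symm])
      exact hl.2 this
    · exact ⟨⟨0, hn⟩, fun h => absurd h hl⟩
  choose κ₂ hκ₂ using hcert2
  set κ : Fin m → Fin n := fun l => if l ∈ T then κ₂ l else κ₁ l with hκdef
  -- choose the scaling parameter t
  obtain ⟨t, ht0, ht⟩ := exists_t (S \ T)
    (fun l => Sfun (β l) (κ₁ l) (v₀ - v l))
    (fun l => Sfun (β l) (κ₁ l) (uPt (β ls)))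
    (fun l hl => by
      have hl' := Finset.mem_sdiff.mp hl
      exact (hκ₁ l ⟨hl'.1, hl'.2⟩).2)
  -- the evaluation point
  set u : Fin n → ℝ := uPt (β ls) with hudef
  have husum : ∑ i, u i = 0 := sum_combo _ _
  set x₀ : Fin n → ℝ := v₀ + t • u with hx₀def
  have hx₀sum : ∑ i, x₀ i = d := by
    simp only [hx₀def, Pi.add_apply, Pi.smul_apply, smul_eq_mul, Finset.sum_add_distrib,
      ← Finset.mul_sum, husum, mul_zero, add_zero]
    rw [hv₀def]; exact hv l₀
  set x₀' : {y : Fin n → ℝ // ∑ i, y i = d} := ⟨x₀, hx₀sum⟩ with hx₀'def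
  -- the open neighbourhood
  set U : Set {y : Fin n → ℝ // ∑ i, y i = d} :=
    (⋂ k : Fin n, {y : {y : Fin n → ℝ // ∑ i, y i = d} |
      k ∈ J n → 0 < Sfun (β ls) k ((y : Fin n → ℝ) - v₀)}) ∩
    (⋂ l : Fin m, {y : {y : Fin n → ℝ // ∑ i, y i = d} |
      a l ≠ 0 → l ≠ ls → Sfun (β l) (κ l) ((y : Fin n → ℝ) - v l) < 0}) with hUdef
  have hUmem : ∀ y, y ∈ U ↔
      ((∀ k ∈ J n, 0 < Sfun (β ls) k ((y : Fin n → ℝ) - v₀)) ∧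
       (∀ l : Fin m, a l ≠ 0 → l ≠ ls → Sfun (β l) (κ l) ((y : Fin n → ℝ) - v l) < 0)) := by
    intro y
    simp only [hUdef, Set.mem_inter_iff, Set.mem_iInter, Set.mem_setOf_eq]
  -- x₀ ∈ U
  have hx₀U : x₀' ∈ U := by
    rw [hUmem]
    constructor
    · intro k hk
      have : (x₀' : Fin n → ℝ) - v₀ = t • u := by
        simp only [hx₀'def, hx₀def]; abel
      rw [this, Sfun_smul, hudef]
      have := Sfun_combo (hβtree ls) (fun j => ((n:ℝ) + 1) ^ (n * ((β ls) j : ℕ) + (j : ℕ))) hk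
      rw [show uPt (β ls) = ∑ j ∈ J n, (((n:ℝ) + 1) ^ (n * ((β ls) j : ℕ) + (j : ℕ))) • gVec (β ls) j from rfl, this]
      positivity
    · intro l hal hls
      have hlS : l ∈ S := (hSmem l).mpr hal
      by_cases hlT : l ∈ T
      · have hkl := hκ₂ l ⟨hlT, hls⟩
        have hveq : v l = v₀ := ((hTmem l).mp hlT).2
        have hx : (x₀' : Fin n → ℝ) - v l = t • u := by
          simp only [hx₀'def, hx₀def, hveq]; abel
        rw [hκdef]
        simp only [hlT, if_true]
        rw [hx, Sfun_smul]
        exact mul_neg_of_pos_of_neg ht0 hkl.2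
      · have hx : (x₀' : Fin n → ℝ) - v l = (v₀ - v l) + t • u := by
          simp only [hx₀'def, hx₀def]; abel
        rw [hκdef]
        simp only [hlT, if_false]
        rw [hx, Sfun_add, Sfun_smul]
        exact ht l (Finset.mem_sdiff.mpr ⟨hlS, hlT⟩)
  -- U is open
  have hUopen : IsOpen U := by
    rw [hUdef]
    refine IsOpen.inter (isOpen_iInter_of_finite (fun k => ?_))
      (isOpen_iInter_of_finite (fun l => ?_))
    · by_cases hk : k ∈ J n
      · have : {y : {y : Fin n → ℝ // ∑ i, y i = d} |
            k ∈ J n → 0 < Sfun (β ls) k ((y : Fin n → ℝ) - v₀)}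
            = {y : {y : Fin n → ℝ // ∑ i, y i = d} | 0 < Sfun (β ls) k ((y : Fin n → ℝ) - v₀)} := by
          ext y; simp [hk]
        rw [this]
        exact isOpen_lt continuous_const (contSfun (β ls) k v₀)
      · have : {y : {y : Fin n → ℝ // ∑ i, y i = d} |
            k ∈ J n → 0 < Sfun (β ls) k ((y : Fin n → ℝ) - v₀)} = Set.univ := by
          ext y; simp [hk]
        rw [this]; exact isOpen_univ
    · by_cases hl : a l ≠ 0 ∧ l ≠ ls
      · have : {y : {y : Fin n → ℝ // ∑ i, y i = d} |
            a l ≠ 0 → l ≠ ls → Sfun (β l) (κ l) ((y : Fin n → ℝ) - v l) < 0}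
            = {y : {y : Fin n → ℝ // ∑ i, y i = d} | Sfun (β l) (κ l) ((y : Fin n → ℝ) - v l) < 0} := by
          ext y; simp [hl.1, hl.2]
        rw [this]
        exact isOpen_lt (contSfun (β l) (κ l) (v l)) continuous_const
      · have : {y : {y : Fin n → ℝ // ∑ i, y i = d} |
            a l ≠ 0 → l ≠ ls → Sfun (β l) (κ l) ((y : Fin n → ℝ) - v l) < 0} = Set.univ := by
          ext y
          simp only [Set.mem_setOf_eq, Set.mem_univ, iff_true]
          intro h1 h2
          exact absurd ⟨h1, h2⟩ hl
        rw [this]; exact isOpen_univ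
  -- U is contained in the support
  have hUsub : U ⊆ {x : {y : Fin n → ℝ // ∑ i, y i = d} |
      (∑ l, a l * ((fun w => v l + w) '' C l).indicator (fun _ => (1 : ℤ)) (x : Fin n → ℝ))
        ≠ 0} := by
    intro y hy
    rw [hUmem] at hy
    have hterm : ∀ l : Fin m,
        a l * ((fun w => v l + w) '' C l).indicator (fun _ => (1 : ℤ)) (y : Fin n → ℝ)
        = if l = ls then a ls else 0 := by
      intro l
      by_cases hls : l = ls
      · subst hls
        rw [if_pos rfl]
        have hmem : (y : Fin n → ℝ) ∈ (fun w => v l + w) '' C l := by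
          refine ⟨(y : Fin n → ℝ) - v l, ?_, by simp⟩
          rw [hβC l]
          refine mem_coneOf (hβtree l) ?_ (fun k hk => ?_)
          · simp only [Pi.sub_apply, Finset.sum_sub_distrib]
            rw [y.2, hv l, sub_self]
          · have hveq : v l = v₀ := hlsT'.2
            rw [hveq]
            exact le_of_lt (hy.1 k hk)
        rw [Set.indicator_of_mem hmem]
        ring
      · rw [if_neg hls]
        by_cases hal : a l = 0
        · rw [hal]; ring
        · have hneg := hy.2 l hal hls
          have hnmem : (y : Fin n → ℝ) ∉ (fun w => v l + w) '' C l := by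
            rintro ⟨w, hw, hwy⟩
            have hweq : w = (y : Fin n → ℝ) - v l := by
              rw [← hwy]; simp
            have hκJ : κ l ∈ J n := by
              rw [hκdef]
              by_cases hlT : l ∈ T
              · simp only [hlT, if_true]
                exact (hκ₂ l ⟨hlT, hls⟩).1
              · simp only [hlT, if_false]
                exact (hκ₁ l ⟨(hSmem l).mpr hal, hlT⟩).1
            have := coneOf_coords (hβtree l) (by rw [← hβC l]; exact hw) hκJ
            rw [hweq] at this
            linarith
          rw [Set.indicator_of_notMem hnmem]
          ring
    simp only [Set.mem_setOf_eq]
    rw [Finset.sum_congr rfl (fun l _ => hterm l), Finset.sum_ite_eq' Finset.univ ls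
      (fun _ => a ls)]
    simp only [Finset.mem_univ, if_true]
    exact hlsT'.1
  have hint : x₀' ∈ interior {x : {y : Fin n → ℝ // ∑ i, y i = d} |
      (∑ l, a l * ((fun w => v l + w) '' C l).indicator (fun _ => (1 : ℤ)) (x : Fin n → ℝ))
        ≠ 0} := mem_interior.mpr ⟨U, hUsub, hUopen, hx₀U⟩
  rw [hsupp] at hint
  exact absurd hint (Set.notMem_empty _)
end
end

section
/- Let K be an infinite field, let n ≥ 1 and k ≥ 0 be integers, and let p ∈ K[x₁,…,xₙ,y₁,…,yₙ] be a polynomial of total degree at most k. If p(z₁,…,zₙ,z₁^{k+1},…,zₙ^{k+1}) = 0 for all z₁,…,zₙ ∈ K, then p = 0. -/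
open MvPolynomial

/-- Over an infinite field, a polynomial `p(x₁,…,xₙ,y₁,…,yₙ)` of total degree at most `k`
vanishing at all points `(z₁,…,zₙ,z₁^{k+1},…,zₙ^{k+1})` is zero. -/
theorem eq_zero_of_vanishes_on_power_graph {K : Type*} [Field K] [Infinite K]
    {n k : ℕ} (hn : 1 ≤ n)
    (p : MvPolynomial (Fin n ⊕ Fin n) K) (hdeg : p.totalDegree ≤ k)
    (hvanish : ∀ z : Fin n → K,
      MvPolynomial.eval (Sum.elim z fun i => z i ^ (k + 1)) p = 0) :
    p = 0 := by
  classical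
  set f : Fin n ⊕ Fin n → MvPolynomial (Fin n) K :=
    Sum.elim X (fun i => X i ^ (k + 1)) with hf
  -- the combined exponent map
  set g : (Fin n ⊕ Fin n →₀ ℕ) → (Fin n →₀ ℕ) :=
    fun m => Finsupp.equivFunOnFinite.symm
      (fun i => m (Sum.inl i) + (k + 1) * m (Sum.inr i)) with hg
  have hgapp : ∀ m i, g m i = m (Sum.inl i) + (k + 1) * m (Sum.inr i) := by
    intro m i; simp [hg]
  -- substituted polynomial
  have hq0 : (aeval f p : MvPolynomial (Fin n) K) = 0 := by
    apply MvPolynomial.funext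
    intro z
    have : eval z (aeval f p) = eval (Sum.elim z fun i => z i ^ (k + 1)) p := by
      rw [aeval_def, eval₂_comp_left (eval z)]
      congr 1
      · ext c; simp [algebraMap_eq]
      · funext j; cases j <;> simp [hf]
    rw [this, hvanish z, map_zero]
  -- monomials map as expected
  have hmono : ∀ (m : Fin n ⊕ Fin n →₀ ℕ) (c : K),
      aeval f (monomial m c) = monomial (g m) c := by
    intro m c
    rw [aeval_monomial, monomial_eq]
    congr 1
    rw [Finsupp.prod_fintype _ _ (fun _ => pow_zero _),
        Finsupp.prod_fintype _ _ (fun _ => pow_zero _),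
        Fintype.prod_sum_type]
    rw [← Finset.prod_mul_distrib]
    apply Finset.prod_congr rfl
    intro i _
    simp only [hf, Sum.elim_inl, Sum.elim_inr, hgapp, ← pow_mul, ← pow_add]
  -- bound on exponents in the support
  have hbound : ∀ m ∈ p.support, ∀ j, m j ≤ k := by
    intro m hm j
    refine le_trans ?_ (le_trans (le_totalDegree hm) hdeg)
    by_cases hj : j ∈ m.support
    · exact Finset.single_le_sum (f := fun j => m j) (fun _ _ => Nat.zero_le _) hj
    · simp [Finsupp.notMem_support_iff.mp hj]
  -- injectivity of g on support
  have hinj : ∀ m ∈ p.support, ∀ m' ∈ p.support, g m = g m' → m = m' := by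
    intro m hm m' hm' hgeq
    have key : ∀ i, m (Sum.inl i) = m' (Sum.inl i) ∧ m (Sum.inr i) = m' (Sum.inr i) := by
      intro i
      have h1 : m (Sum.inl i) + (k + 1) * m (Sum.inr i)
          = m' (Sum.inl i) + (k + 1) * m' (Sum.inr i) := by
        have := congrArg (fun x => x i) hgeq
        simpa [hgapp] using this
      have hlt : m (Sum.inl i) < k + 1 := Nat.lt_succ_of_le (hbound m hm _)
      have hlt' : m' (Sum.inl i) < k + 1 := Nat.lt_succ_of_le (hbound m' hm' _)
      constructor
      · have := congrArg (fun x => x % (k + 1)) h1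
        simpa [Nat.add_mul_mod_self_left, Nat.mod_eq_of_lt hlt,
          Nat.mod_eq_of_lt hlt'] using this
      · have := congrArg (fun x => x / (k + 1)) h1
        simpa [Nat.add_mul_div_left _ _ (Nat.succ_pos k),
          Nat.div_eq_of_lt hlt, Nat.div_eq_of_lt hlt'] using this
    ext j
    cases j with
    | inl i => exact (key i).1
    | inr i => exact (key i).2
  -- conclude coefficientwise
  ext m₀
  rw [coeff_zero]
  by_cases hm₀ : m₀ ∈ p.support
  · have hsum : (aeval f p : MvPolynomial (Fin n) K)
        = ∑ m ∈ p.support, monomial (g m) (coeff m p) := by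
      conv_lhs => rw [p.as_sum, map_sum]
      exact Finset.sum_congr rfl fun m _ => hmono m (coeff m p)
    have : coeff (g m₀) (aeval f p : MvPolynomial (Fin n) K) = coeff m₀ p := by
      rw [hsum, coeff_sum]
      rw [Finset.sum_eq_single_of_mem m₀ hm₀]
      · simp
      · intro m hm hne
        rw [coeff_monomial, if_neg]
        intro h
        exact hne (hinj m hm m₀ hm₀ h)
    rw [← this, hq0, coeff_zero]
  · simpa using hm₀
end

section
/- Let d ≥ 3 be an integer and let L = ℚ(u,v) be the field of rational functions in two indeterminates u, v over ℚ. Set F(z) = (z+u)(z+v) ∈ L[z], G(z) = ∏_{k=0}^{d} (z + ku + (d−k)v) ∈ L[z], and P(z) = (G(z) − G(0))/z ∈ L[z]. Let Q ∈ L[H₁,…,H_d] be the unique polynomial of degree at most 1 in each variable Hᵢ that is congruent to P(H₁ + ⋯ + H_d) modulo the ideal generated by F(H₁), …, F(H_d), and let ℓ(z) = Q(z,z,…,z) ∈ L[z]. Write ℓ(z) = a₀(z) + a₁(z)·F(z) + a₂(z)·F(z)² + ⋯ with each aₘ ∈ L[z] of degree at most 1 (this expansion exists and is unique because F is monic of degree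 2). Then the coefficient of z in a₁(z) equals d(d−1)(d−2)·∏_{k=2}^{d−2}(ku + (d−k)v), where the product is 1 when d = 3. -/
noncomputable section
set_option maxHeartbeats 1000000
set_option synthInstance.maxHeartbeats 400000

/-- The field `L = ℚ(u,v)` of rational functions in two indeterminates over `ℚ`. -/
abbrev Lf : Type _ := FractionRing (MvPolynomial (Fin 2) ℚ)

/-- The indeterminate `u`. -/
def uu : Lf := algebraMap (MvPolynomial (Fin 2) ℚ) Lf (MvPolynomial.X 0)

/-- The indeterminate `v`. -/
def vv : Lf := algebraMap (MvPolynomial (Fin 2) ℚ) Lf (MvPolynomial.X 1)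

lemma eval_zero_of_mem_span' {R S : Type*} [CommRing R] [CommRing S] (f : R →+* S)
    (s : Set R) (h0 : ∀ x ∈ s, f x = 0) {x : R} (hx : x ∈ Ideal.span s) : f x = 0 :=
  Submodule.span_induction (fun x h => h0 x h) (map_zero f)
    (fun a b _ _ ha hb => by rw [map_add, ha, hb, add_zero])
    (fun r a _ ha => by rw [smul_eq_mul, map_mul, ha, mul_zero]) hx

lemma nz_lin (a b : ℕ) (h : a ≠ 0 ∨ b ≠ 0) : (a : Lf) * uu + (b : Lf) * vv ≠ 0 := by
  intro hzero
  have hinj : Function.Injective (algebraMap (MvPolynomial (Fin 2) ℚ) Lf) :=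
    IsFractionRing.injective _ _
  have h2 : ((a : MvPolynomial (Fin 2) ℚ) * MvPolynomial.X 0
      + (b : MvPolynomial (Fin 2) ℚ) * MvPolynomial.X 1) = 0 := by
    apply hinj
    rw [map_add, map_mul, map_mul, map_natCast, map_natCast, map_zero]
    exact hzero
  have ha := congrArg (MvPolynomial.eval fun i : Fin 2 => if i = 0 then (1:ℚ) else 0) h2
  have hb := congrArg (MvPolynomial.eval fun i : Fin 2 => if i = 0 then (0:ℚ) else 1) h2
  simp at ha hb
  rcases h with h | h
  · exact h ha
  · exact h hb

lemma uv_ne : vv - uu ≠ 0 := by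
  intro hzero
  have hinj : Function.Injective (algebraMap (MvPolynomial (Fin 2) ℚ) Lf) :=
    IsFractionRing.injective _ _
  have h2 : (MvPolynomial.X 1 - MvPolynomial.X 0 : MvPolynomial (Fin 2) ℚ) = 0 := by
    apply hinj
    rw [map_sub, map_zero]
    exact hzero
  have h := congrArg (MvPolynomial.eval fun i : Fin 2 => if i = 0 then (0:ℚ) else 1) h2
  simp at h

lemma diag_deriv_monomial {n : ℕ} {K : Type*} [CommRing K] (m : Fin n →₀ ℕ)
    (hm : ∀ i, m i ≤ 1) (c t x y : K) :
    (Polynomial.derivative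
        ((MvPolynomial.aeval fun _ : Fin n => Polynomial.X) (MvPolynomial.monomial m c))).eval t
        * (x - y)
      = ∑ i : Fin n, (MvPolynomial.eval (Function.update (fun _ => t) i x) (MvPolynomial.monomial m c)
          - MvPolynomial.eval (Function.update (fun _ => t) i y) (MvPolynomial.monomial m c)) := by
  classical
  have hm1 : ∀ i ∈ m.support, m i = 1 := fun i hi =>
    le_antisymm (hm i) (Nat.one_le_iff_ne_zero.2 (Finsupp.mem_support_iff.1 hi))
  set N := ∑ j ∈ m.support, m j with hNdef
  have hmono : ((MvPolynomial.aeval fun _ : Fin n => (Polynomial.X : Polynomial K))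
      (MvPolynomial.monomial m c)) = Polynomial.C c * Polynomial.X ^ N := by
    rw [MvPolynomial.aeval_monomial]
    congr 1
    rw [Finsupp.prod, Finset.prod_pow_eq_pow_sum]
  rw [hmono, Polynomial.derivative_C_mul, Polynomial.derivative_X_pow]
  have hzero : ∀ i ∈ Finset.univ, i ∉ m.support →
      (MvPolynomial.eval (Function.update (fun _ => t) i x) (MvPolynomial.monomial m c)
        - MvPolynomial.eval (Function.update (fun _ => t) i y) (MvPolynomial.monomial m c)) = 0 := by
    intro i _ hi
    rw [MvPolynomial.eval_monomial, MvPolynomial.eval_monomial, sub_eq_zero]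
    congr 1
    refine Finset.prod_congr rfl fun j hj => ?_
    have hji : j ≠ i := fun h => hi (h ▸ hj)
    simp only [Function.update_of_ne hji]
  rw [← Finset.sum_subset (Finset.subset_univ m.support) hzero]
  have hterm : ∀ i ∈ m.support, ∀ w : K,
      MvPolynomial.eval (Function.update (fun _ => t) i w) (MvPolynomial.monomial m c)
        = c * (w * t ^ (N - 1)) := by
    intro i hi w
    rw [MvPolynomial.eval_monomial]
    simp only [Finsupp.prod]
    rw [← Finset.mul_prod_erase _ _ hi]
    have h1 : Function.update (fun _ : Fin n => t) i w i ^ m i = w := by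
      rw [Function.update_self, hm1 i hi, pow_one]
    have h2 : ∏ j ∈ m.support.erase i, Function.update (fun _ : Fin n => t) i w j ^ m j
        = t ^ (N - 1) := by
      have heq : ∀ j ∈ m.support.erase i, Function.update (fun _ : Fin n => t) i w j ^ m j
          = t ^ m j := fun j hj => by
        rw [Function.update_of_ne (Finset.ne_of_mem_erase hj)]
      rw [Finset.prod_congr rfl heq, Finset.prod_pow_eq_pow_sum]
      congr 1
      have h4 := Finset.add_sum_erase _ m hi
      have h5 := hm1 i hi
      omega
    rw [h1, h2]
  have hsum : ∑ i ∈ m.support,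
      (MvPolynomial.eval (Function.update (fun _ => t) i x) (MvPolynomial.monomial m c)
        - MvPolynomial.eval (Function.update (fun _ => t) i y) (MvPolynomial.monomial m c))
      = (m.support.card : K) * (c * (x * t ^ (N-1)) - c * (y * t ^ (N-1))) := by
    rw [Finset.sum_congr rfl fun i hi => by rw [hterm i hi x, hterm i hi y]]
    rw [Finset.sum_const, nsmul_eq_mul]
  rw [hsum]
  have hcard : (m.support.card : K) = (N : K) := by
    rw [hNdef]
    rw [Finset.sum_congr rfl hm1, Finset.sum_const, smul_eq_mul, mul_one]
  rw [hcard]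
  simp only [Polynomial.eval_mul, Polynomial.eval_C, Polynomial.eval_pow, Polynomial.eval_X]
  ring

lemma diag_deriv {n : ℕ} {K : Type*} [CommRing K] (Q : MvPolynomial (Fin n) K)
    (hQ : ∀ i, Q.degreeOf i ≤ 1) (t x y : K) :
    (Polynomial.derivative ((MvPolynomial.aeval fun _ : Fin n => Polynomial.X) Q)).eval t * (x - y)
      = ∑ i : Fin n, (MvPolynomial.eval (Function.update (fun _ => t) i x) Q
          - MvPolynomial.eval (Function.update (fun _ => t) i y) Q) := by
  classical
  have hQm : ∀ m ∈ Q.support, ∀ i, m i ≤ 1 := by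
    intro m hm i
    refine le_trans ?_ (hQ i)
    rw [MvPolynomial.degreeOf_eq_sup]
    exact Finset.le_sup (f := fun m => m i) hm
  conv_lhs => rw [Q.as_sum]
  conv_rhs => rw [Q.as_sum]
  rw [map_sum, map_sum, Polynomial.eval_finset_sum, Finset.sum_mul]
  have hsplit : ∀ i : Fin n,
      (MvPolynomial.eval (Function.update (fun _ => t) i x) (∑ m ∈ Q.support, MvPolynomial.monomial m (MvPolynomial.coeff m Q))
        - MvPolynomial.eval (Function.update (fun _ => t) i y) (∑ m ∈ Q.support, MvPolynomial.monomial m (MvPolynomial.coeff m Q)))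
      = ∑ m ∈ Q.support,
        (MvPolynomial.eval (Function.update (fun _ => t) i x) (MvPolynomial.monomial m (MvPolynomial.coeff m Q))
          - MvPolynomial.eval (Function.update (fun _ => t) i y) (MvPolynomial.monomial m (MvPolynomial.coeff m Q))) := by
    intro i
    rw [map_sum, map_sum, Finset.sum_sub_distrib]
  rw [Finset.sum_congr rfl fun i _ => hsplit i, Finset.sum_comm]
  exact Finset.sum_congr rfl fun m hm => diag_deriv_monomial m (hQm m hm) _ t x y


/-- With `F(z) = (z+u)(z+v)`, `G(z) = ∏_{k=0}^d (z + ku + (d−k)v)`,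
`P(z) = (G(z) − G(0))/z`, `Q` the multilinear reduction of `P(H₁+⋯+H_d)` modulo
`F(H₁),…,F(H_d)`, and `ℓ(z) = Q(z,…,z) = a₀(z) + a₁(z)F(z) + a₂(z)F(z)² + ⋯` with each
`aₘ` of degree at most 1, the coefficient of `z` in `a₁` equals
`d(d−1)(d−2)·∏_{k=2}^{d−2}(ku + (d−k)v)`. -/
theorem fiber_class_coefficient (d : ℕ) (hd : 3 ≤ d)
    (F G P : Polynomial Lf)
    (hF : F = (Polynomial.X + Polynomial.C uu) * (Polynomial.X + Polynomial.C vv))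
    (hG : G = ∏ k ∈ Finset.range (d + 1),
      (Polynomial.X + Polynomial.C ((k : Lf) * uu + ((d - k : ℕ) : Lf) * vv)))
    (hP : Polynomial.X * P = G - Polynomial.C (G.eval 0))
    (Q : MvPolynomial (Fin d) Lf)
    (hQdeg : ∀ i : Fin d, Q.degreeOf i ≤ 1)
    (hQcong : Polynomial.aeval (∑ i : Fin d, MvPolynomial.X i) P - Q ∈
      Ideal.span (Set.range fun i : Fin d =>
        Polynomial.aeval (MvPolynomial.X i : MvPolynomial (Fin d) Lf) F))
    (ell : Polynomial Lf)
    (hell : ell = MvPolynomial.aeval (fun _ : Fin d => (Polynomial.X : Polynomial Lf)) Q)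
    (a₀ a₁ : Polynomial Lf) (ha₀ : a₀.degree ≤ 1) (ha₁ : a₁.degree ≤ 1)
    (hdecomp : F ^ 2 ∣ ell - a₀ - a₁ * F) :
    a₁.coeff 1 = (d : Lf) * ((d : Lf) - 1) * ((d : Lf) - 2) *
      ∏ k ∈ Finset.Icc 2 (d - 2), ((k : Lf) * uu + ((d - k : ℕ) : Lf) * vv) := by
  classical
  obtain ⟨c, hc⟩ := hdecomp
  have hFu : F.eval (-uu) = 0 := by simp [hF]
  have hFv : F.eval (-vv) = 0 := by simp [hF]
  have hae : ∀ (h : Fin d → Lf) (p : MvPolynomial (Fin d) Lf),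
      MvPolynomial.aeval h p = MvPolynomial.eval h p := by
    intro h p
    rw [← MvPolynomial.coe_aeval_eq_eval]
    rfl
  -- grid values of Q
  have hgrid : ∀ h : Fin d → Lf, (∀ i, h i = -uu ∨ h i = -vv) →
      MvPolynomial.eval h Q = P.eval (∑ i, h i) := by
    intro h hh
    have hzero : ∀ x ∈ Set.range (fun i : Fin d =>
        Polynomial.aeval (MvPolynomial.X i : MvPolynomial (Fin d) Lf) F),
        MvPolynomial.eval h x = 0 := by
      rintro x ⟨i, rfl⟩
      have h1 := Polynomial.aeval_algHom_apply (MvPolynomial.aeval h)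
        (MvPolynomial.X i : MvPolynomial (Fin d) Lf) F
      rw [MvPolynomial.aeval_X, hae] at h1
      rw [← h1, Polynomial.coe_aeval_eq_eval]
      rcases hh i with h' | h' <;> rw [h']
      · exact hFu
      · exact hFv
    have h2 := eval_zero_of_mem_span' (MvPolynomial.eval h) _ hzero hQcong
    rw [map_sub, sub_eq_zero] at h2
    rw [← h2]
    have h3 := Polynomial.aeval_algHom_apply (MvPolynomial.aeval h)
      (∑ i : Fin d, MvPolynomial.X i) P
    have h4 : (MvPolynomial.aeval h) (∑ i : Fin d, (MvPolynomial.X i : MvPolynomial (Fin d) Lf))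
        = ∑ i, h i := by
      rw [map_sum]
      simp
    rw [h4, hae] at h3
    rw [← h3, Polynomial.coe_aeval_eq_eval]
  -- G vanishing and P values
  have hGz : ∀ j, j ≤ d → G.eval (-((j:Lf)*uu + ((d-j:ℕ):Lf)*vv)) = 0 := by
    intro j hj
    rw [hG, Polynomial.eval_prod]
    refine Finset.prod_eq_zero (i := j) (Finset.mem_range.2 (by omega)) ?_
    simp only [Polynomial.eval_add, Polynomial.eval_X, Polynomial.eval_C]
    ring
  have hPval : ∀ j, j ≤ d → ((j:Lf)*uu + ((d-j:ℕ):Lf)*vv)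
      * P.eval (-((j:Lf)*uu + ((d-j:ℕ):Lf)*vv)) = G.eval 0 := by
    intro j hj
    have h1 := congrArg (Polynomial.eval (-((j:Lf)*uu + ((d-j:ℕ):Lf)*vv))) hP
    rw [Polynomial.eval_mul, Polynomial.eval_X, Polynomial.eval_sub, Polynomial.eval_C,
      hGz j hj] at h1
    linear_combination -h1
  -- cast facts
  have hd1cast : ((d-1:ℕ):Lf) = (d:Lf) - 1 := by
    rw [Nat.cast_sub (by omega), Nat.cast_one]
  -- Q values at the four kinds of points
  have hvalA : MvPolynomial.eval (fun _ : Fin d => -uu) Q = P.eval (-((d:Lf)*uu)) := by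
    rw [hgrid _ (fun i => Or.inl rfl)]
    congr 1
    rw [Finset.sum_const, Finset.card_univ, Fintype.card_fin, nsmul_eq_mul]
    ring
  have hvalB : MvPolynomial.eval (fun _ : Fin d => -vv) Q = P.eval (-((d:Lf)*vv)) := by
    rw [hgrid _ (fun i => Or.inr rfl)]
    congr 1
    rw [Finset.sum_const, Finset.card_univ, Fintype.card_fin, nsmul_eq_mul]
    ring
  have hcarderase : ∀ i₀ : Fin d, ((Finset.univ : Finset (Fin d)) \ {i₀}).card = d - 1 := by
    intro i₀
    rw [Finset.sdiff_singleton_eq_erase, Finset.card_erase_of_mem (Finset.mem_univ i₀),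
      Finset.card_univ, Fintype.card_fin]
  have hvalA1 : ∀ i₀ : Fin d, MvPolynomial.eval (Function.update (fun _ : Fin d => -uu) i₀ (-vv)) Q
      = P.eval (-(((d:Lf)-1)*uu + vv)) := by
    intro i₀
    rw [hgrid _ ?_]
    · congr 1
      rw [Finset.sum_update_of_mem (Finset.mem_univ i₀), Finset.sum_const, hcarderase i₀,
        nsmul_eq_mul, hd1cast.symm, Nat.cast_sub (by omega : 1 ≤ d), Nat.cast_one]
      ring
    · intro i
      rcases eq_or_ne i i₀ with h | h
      · rw [h, Function.update_self]; exact Or.inr rfl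
      · rw [Function.update_of_ne h]; exact Or.inl rfl
  have hvalB1 : ∀ i₀ : Fin d, MvPolynomial.eval (Function.update (fun _ : Fin d => -vv) i₀ (-uu)) Q
      = P.eval (-(uu + ((d:Lf)-1)*vv)) := by
    intro i₀
    rw [hgrid _ ?_]
    · congr 1
      rw [Finset.sum_update_of_mem (Finset.mem_univ i₀), Finset.sum_const, hcarderase i₀,
        nsmul_eq_mul, Nat.cast_sub (by omega : 1 ≤ d), Nat.cast_one]
      ring
    · intro i
      rcases eq_or_ne i i₀ with h | h
      · rw [h, Function.update_self]; exact Or.inl rfl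
      · rw [Function.update_of_ne h]; exact Or.inr rfl
  -- the four P-value equations
  have EA : ((d:Lf)*uu) * P.eval (-((d:Lf)*uu)) = G.eval 0 := by
    have h1 := hPval d le_rfl
    rw [Nat.sub_self] at h1
    simpa using h1
  have EB : ((d:Lf)*vv) * P.eval (-((d:Lf)*vv)) = G.eval 0 := by
    have h1 := hPval 0 (by omega)
    rw [Nat.sub_zero] at h1
    simpa using h1
  have EA1 : (((d:Lf)-1)*uu + vv) * P.eval (-(((d:Lf)-1)*uu + vv)) = G.eval 0 := by
    have h1 := hPval (d-1) (by omega)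
    have h2 : d - (d - 1) = 1 := by omega
    rw [h2, hd1cast] at h1
    simpa using h1
  have EB1 : (uu + ((d:Lf)-1)*vv) * P.eval (-(uu + ((d:Lf)-1)*vv)) = G.eval 0 := by
    have h1 := hPval 1 (by omega)
    rw [hd1cast] at h1
    simpa using h1
  -- product splitting
  set M := ∏ k ∈ Finset.Icc 2 (d - 2), ((k : Lf) * uu + ((d - k : ℕ) : Lf) * vv) with hM
  have hsplitset : Finset.range (d+1)
      = insert 0 (insert 1 (insert (d-1) (insert d (Finset.Icc 2 (d-2))))) := by
    ext k
    simp only [Finset.mem_range, Finset.mem_insert, Finset.mem_Icc]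
    omega
  have hG0 : G.eval 0 = ((d:Lf)*vv) * ((uu + ((d:Lf)-1)*vv) * ((((d:Lf)-1)*uu + vv)
      * (((d:Lf)*uu) * M))) := by
    rw [hG, Polynomial.eval_prod]
    simp only [Polynomial.eval_add, Polynomial.eval_X, Polynomial.eval_C, zero_add]
    rw [hsplitset, Finset.prod_insert (by simp only [Finset.mem_insert, Finset.mem_Icc]; omega),
      Finset.prod_insert (by simp only [Finset.mem_insert, Finset.mem_Icc]; omega),
      Finset.prod_insert (by simp only [Finset.mem_insert, Finset.mem_Icc]; omega),
      Finset.prod_insert (by simp only [Finset.mem_Icc]; omega)]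
    have e0 : d - 0 = d := by omega
    have e1 : d - (d-1) = 1 := by omega
    rw [e0, e1, Nat.sub_self, hd1cast]
    push_cast
    ring
  -- nonzeroness
  have hnz_du : (d:Lf)*uu ≠ 0 := by
    have := nz_lin d 0 (Or.inl (by omega))
    simpa using this
  have hnz_dv : (d:Lf)*vv ≠ 0 := by
    have := nz_lin 0 d (Or.inr (by omega))
    simpa using this
  have hnz_A1 : ((d:Lf)-1)*uu + vv ≠ 0 := by
    have := nz_lin (d-1) 1 (Or.inl (by omega))
    rw [hd1cast] at this
    simpa using this
  have hnz_B1 : uu + ((d:Lf)-1)*vv ≠ 0 := by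
    have := nz_lin 1 (d-1) (Or.inl (by omega))
    rw [hd1cast] at this
    simpa using this
  have hw : vv - uu ≠ 0 := uv_ne
  -- explicit values
  have hA : P.eval (-((d:Lf)*uu)) = ((d:Lf)*vv) * (uu + ((d:Lf)-1)*vv) * ((((d:Lf)-1))*uu + vv) * M := by
    apply mul_left_cancel₀ hnz_du
    rw [EA, hG0]; ring
  have hB : P.eval (-((d:Lf)*vv)) = (uu + ((d:Lf)-1)*vv) * ((((d:Lf)-1))*uu + vv) * ((d:Lf)*uu) * M := by
    apply mul_left_cancel₀ hnz_dv
    rw [EB, hG0]; ring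
  have hA1 : P.eval (-(((d:Lf)-1)*uu + vv)) = ((d:Lf)*vv) * (uu + ((d:Lf)-1)*vv) * ((d:Lf)*uu) * M := by
    apply mul_left_cancel₀ hnz_A1
    rw [EA1, hG0]; ring
  have hB1 : P.eval (-(uu + ((d:Lf)-1)*vv)) = ((d:Lf)*vv) * ((((d:Lf)-1))*uu + vv) * ((d:Lf)*uu) * M := by
    apply mul_left_cancel₀ hnz_B1
    rw [EB1, hG0]; ring
  -- ell evaluations
  have hell_eval : ∀ w : Lf, ell.eval w = MvPolynomial.eval (fun _ : Fin d => w) Q := by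
    intro w
    have h1 := MvPolynomial.comp_aeval_apply
      (f := fun _ : Fin d => (Polynomial.X : Polynomial Lf)) (Polynomial.aeval w) Q
    simp only [Polynomial.aeval_X] at h1
    rw [hell, ← Polynomial.coe_aeval_eq_eval, h1, hae]
  -- derivative identities from diag_deriv
  have E5 := diag_deriv Q hQdeg (-uu) (-uu) (-vv)
  have E6 := diag_deriv Q hQdeg (-vv) (-uu) (-vv)
  rw [← hell] at E5 E6
  have hupdu : ∀ i : Fin d, Function.update (fun _ : Fin d => -uu) i (-uu) = (fun _ : Fin d => -uu) := by
    intro i; exact Function.update_eq_self i _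
  have hupdv : ∀ i : Fin d, Function.update (fun _ : Fin d => -vv) i (-vv) = (fun _ : Fin d => -vv) := by
    intro i; exact Function.update_eq_self i _
  have E5' : (Polynomial.derivative ell).eval (-uu) * (vv - uu)
      = (d:Lf) * (P.eval (-((d:Lf)*uu)) - P.eval (-(((d:Lf)-1)*uu + vv))) := by
    have h1 : (-uu) - (-vv) = vv - uu := by ring
    rw [h1] at E5
    rw [E5]
    rw [Finset.sum_congr rfl fun i _ => by rw [hupdu i, hvalA, hvalA1 i]]
    rw [Finset.sum_const, Finset.card_univ, Fintype.card_fin, nsmul_eq_mul]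
  have E6' : (Polynomial.derivative ell).eval (-vv) * (vv - uu)
      = (d:Lf) * (P.eval (-(uu + ((d:Lf)-1)*vv)) - P.eval (-((d:Lf)*vv))) := by
    have h1 : (-uu) - (-vv) = vv - uu := by ring
    rw [h1] at E6
    rw [E6]
    rw [Finset.sum_congr rfl fun i _ => by rw [hupdv i, hvalB, hvalB1 i]]
    rw [Finset.sum_const, Finset.card_univ, Fintype.card_fin, nsmul_eq_mul]
  -- ell values
  have hellA : ell.eval (-uu) = P.eval (-((d:Lf)*uu)) := by rw [hell_eval, hvalA]
  have hellB : ell.eval (-vv) = P.eval (-((d:Lf)*vv)) := by rw [hell_eval, hvalB]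
  -- decomposition equations
  have E1 : ell.eval (-uu) = a₀.eval (-uu) := by
    have h1 := congrArg (Polynomial.eval (-uu)) hc
    simp only [Polynomial.eval_sub, Polynomial.eval_mul, Polynomial.eval_pow, hFu] at h1
    linear_combination h1
  have E2 : ell.eval (-vv) = a₀.eval (-vv) := by
    have h1 := congrArg (Polynomial.eval (-vv)) hc
    simp only [Polynomial.eval_sub, Polynomial.eval_mul, Polynomial.eval_pow, hFv] at h1
    linear_combination h1
  have hF'u : (Polynomial.derivative F).eval (-uu) = vv - uu := by
    rw [hF, Polynomial.derivative_mul]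
    simp
    ring
  have hF'v : (Polynomial.derivative F).eval (-vv) = uu - vv := by
    rw [hF, Polynomial.derivative_mul]
    simp
    ring
  have hder := congrArg Polynomial.derivative hc
  rw [Polynomial.derivative_sub, Polynomial.derivative_sub, Polynomial.derivative_mul,
    Polynomial.derivative_mul, Polynomial.derivative_pow] at hder
  have E3 : (Polynomial.derivative ell).eval (-uu)
      = (Polynomial.derivative a₀).eval (-uu) + a₁.eval (-uu) * (vv - uu) := by
    have h1 := congrArg (Polynomial.eval (-uu)) hder
    simp only [Polynomial.eval_sub, Polynomial.eval_add, Polynomial.eval_mul,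
      Polynomial.eval_pow, Polynomial.eval_C, hFu, hF'u] at h1
    linear_combination h1
  have E4 : (Polynomial.derivative ell).eval (-vv)
      = (Polynomial.derivative a₀).eval (-vv) + a₁.eval (-vv) * (uu - vv) := by
    have h1 := congrArg (Polynomial.eval (-vv)) hder
    simp only [Polynomial.eval_sub, Polynomial.eval_add, Polynomial.eval_mul,
      Polynomial.eval_pow, Polynomial.eval_C, hFv, hF'v] at h1
    linear_combination h1
  -- coefficients of a₀, a₁
  have ea0 : ∀ w : Lf, a₀.eval w = a₀.coeff 1 * w + a₀.coeff 0 := by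
    intro w
    conv_lhs => rw [Polynomial.eq_X_add_C_of_degree_le_one ha₀]
    simp
  have ea1 : ∀ w : Lf, a₁.eval w = a₁.coeff 1 * w + a₁.coeff 0 := by
    intro w
    conv_lhs => rw [Polynomial.eq_X_add_C_of_degree_le_one ha₁]
    simp
  have da0 : ∀ w : Lf, (Polynomial.derivative a₀).eval w = a₀.coeff 1 := by
    intro w
    conv_lhs => rw [Polynomial.eq_X_add_C_of_degree_le_one ha₀]
    simp
  -- final assembly
  set p₁ := a₀.coeff 1
  set q₁ := a₁.coeff 1
  set q₀ := a₁.coeff 0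
  set A := P.eval (-((d:Lf)*uu))
  set B := P.eval (-((d:Lf)*vv))
  set A1 := P.eval (-(((d:Lf)-1)*uu + vv))
  set B1 := P.eval (-(uu + ((d:Lf)-1)*vv))
  have step1 : A - B = p₁ * (vv - uu) := by
    have h1 : A = a₀.eval (-uu) := by rw [← E1, hellA]
    have h2 : B = a₀.eval (-vv) := by rw [← E2, hellB]
    rw [h1, h2, ea0, ea0]
    ring
  have step3 : q₁ * (vv - uu)^3 = (d:Lf) * (A - A1 + B1 - B) - 2*(A - B) := by
    have h3 : (Polynomial.derivative ell).eval (-uu) * (vv - uu)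
        = p₁ * (vv - uu) + (q₁ * (-uu) + q₀) * (vv - uu)^2 := by
      rw [E3, da0, ea1]; ring
    have h4 : (Polynomial.derivative ell).eval (-vv) * (vv - uu)
        = p₁ * (vv - uu) + (q₁ * (-vv) + q₀) * (uu - vv) * (vv - uu) := by
      rw [E4, da0, ea1]; ring
    linear_combination E5' + E6' - h3 - h4 + 2 * step1
  have step4 : q₁ * (vv - uu)^3
      = ((d:Lf) * ((d:Lf) - 1) * ((d:Lf) - 2) * M) * (vv - uu)^3 := by
    rw [step3, hA, hB, hA1, hB1]
    ring
  have hw3 : (vv - uu)^3 ≠ 0 := pow_ne_zero 3 hw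
  exact mul_right_cancel₀ hw3 step4
end
end

section
/- Let K be a field, let M₁, …, M_m be d×n matrices over K, each of rank d, and let a₁, …, a_m be integers such that the support of the function ∑_{j=1}^m aⱼ·1_{P_{Mⱼ}} has empty interior in the hyperplane {x ∈ ℝⁿ : x₁+⋯+xₙ = d} (with its subspace topology). Then for every integer r ≥ 0 and every e = (e₁,…,eₙ) ∈ ℤⁿ, one has ∑_{j=1}^m aⱼ·χⱼ(e) = 0, where χⱼ(e) = 1 if both ∑_{i∈A} eᵢ < (r+1)·rk_{Mⱼ}(A) for every nonempty A ⊆ {1,…,n} and ∑_{i=1}^n eᵢ = (r+1)d − 1 hold, and χⱼ(e) = 0 otherwise. -/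
open scoped Classical

noncomputable section

lemma aux_rank_submatrix_id {R : Type*} [CommRing R] {k l n : Type*} [Fintype l] [Fintype n]
    (M : Matrix k l R) (e : n ≃ l) : (M.submatrix id ⇑e).rank = M.rank := by
  rw [Matrix.rank, Matrix.rank, Matrix.mulVecLin_submatrix, LinearMap.range_comp,
    LinearMap.range_comp,
    show LinearMap.funLeft R R e.symm = LinearEquiv.funCongrLeft R R e.symm from rfl,
    LinearEquiv.range, Submodule.map_top,
    show LinearMap.funLeft R R (id : k → k) = LinearEquiv.funCongrLeft R R (Equiv.refl k) from rfl]
  exact LinearEquiv.finrank_map_eq _ _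

lemma colRank_univ_s17 {K : Type*} [Field K] {d n : ℕ} (M : Matrix (Fin d) (Fin n) K) :
    colRank M Finset.univ = M.rank := by
  have h : M.submatrix id ((↑) : ↥(Finset.univ : Finset (Fin n)) → Fin n) =
      M.submatrix id ⇑(Equiv.subtypeUnivEquiv (fun x => Finset.mem_univ x)) := rfl
  rw [colRank, h, aux_rank_submatrix_id]

lemma colRank_le_card {K : Type*} [Field K] {d n : ℕ} (M : Matrix (Fin d) (Fin n) K)
    (A : Finset (Fin n)) : colRank M A ≤ A.card := by
  have := Matrix.rank_le_card_width (M.submatrix id ((↑) : A → Fin n))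
  simpa [colRank] using this

lemma colRank_le_height {K : Type*} [Field K] {d n : ℕ} (M : Matrix (Fin d) (Fin n) K)
    (A : Finset (Fin n)) : colRank M A ≤ d := by
  have := Matrix.rank_le_card_height (M.submatrix id ((↑) : A → Fin n))
  simpa [colRank] using this

/-- membership criterion: a point of the hyperplane satisfying the strict inequalities for
all proper nonempty subsets lies in the rank polytope (when `M` has full rank `d`). -/
lemma mem_rankPolytope_of_strict {K : Type*} [Field K] {d n : ℕ}
    (M : Matrix (Fin d) (Fin n) K) (hM : M.rank = d) (y : Fin n → ℝ)
    (hy : ∑ i, y i = d)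
    (hs : ∀ A : Finset (Fin n), A.Nonempty → A ≠ Finset.univ →
      ∑ i ∈ A, y i < (colRank M A : ℝ)) :
    y ∈ rankPolytope M := by
  have hsum : ∀ A : Finset (Fin n), ∑ i ∈ A, y i ≤ (colRank M A : ℝ) := by
    intro A
    rcases eq_or_ne A Finset.univ with rfl | hAu
    · rw [colRank_univ_s17, hM, hy]
    rcases Finset.eq_empty_or_nonempty A with rfl | hAne
    · simp
    · exact (hs A hAne hAu).le
  refine ⟨fun i => ?_, hy, hsum⟩
  rcases eq_or_ne ({i} : Finset (Fin n)) Finset.univ with hiu | hiu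
  · -- n = 1 case: y i = d and d ≤ 1
    have hyi : y i = d := by
      rw [← hy, ← hiu, Finset.sum_singleton]
    have hd1 : d ≤ 1 := by
      have h1 := colRank_le_card M Finset.univ
      rw [colRank_univ_s17, hM, ← hiu, Finset.card_singleton] at h1
      exact h1
    constructor
    · rw [hyi]; positivity
    · rw [hyi]
      exact_mod_cast hd1
  · have h1 : y i < 1 := by
      have := hs {i} (Finset.singleton_nonempty i) hiu
      have hc : colRank M {i} ≤ 1 := by
        simpa using colRank_le_card M {i}
      rw [Finset.sum_singleton] at this
      calc y i < (colRank M {i} : ℝ) := this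
        _ ≤ 1 := by exact_mod_cast hc
    have h0 : 0 < y i := by
      have hcne : ({i} : Finset (Fin n))ᶜ.Nonempty := by
        rw [Finset.nonempty_iff_ne_empty]
        intro h
        exact hiu ((Finset.compl_eq_empty_iff _).mp h)
      have hcnu : ({i} : Finset (Fin n))ᶜ ≠ Finset.univ := by
        intro h
        have : i ∈ ({i} : Finset (Fin n))ᶜ := h ▸ Finset.mem_univ i
        simp at this
      have hlt := hs _ hcne hcnu
      have hle : (colRank M ({i} : Finset (Fin n))ᶜ : ℝ) ≤ d :=
        by exact_mod_cast colRank_le_height M _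
      have hsplit : (∑ j ∈ ({i} : Finset (Fin n))ᶜ, y j) + y i = d := by
        have h := Finset.sum_compl_add_sum ({i} : Finset (Fin n)) y
        rw [Finset.sum_singleton] at h
        rw [← hy]; exact h
      linarith
    exact ⟨h0.le, h1.le⟩

/-- If `∑ aⱼ 1_{P_{Mⱼ}}` is supported on a set of empty interior in the hyperplane
`{∑ xᵢ = d}`, then for every `r` and every integer vector `e`, the signed count of those
`j` for which `∑_{i∈A} eᵢ < (r+1)·rk_{Mⱼ}(A)` for all nonempty `A` and
`∑ eᵢ = (r+1)d − 1` vanishes. -/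
theorem lattice_point_additivity {K : Type*} [Field K] {d n m : ℕ}
    (M : Fin m → Matrix (Fin d) (Fin n) K) (hM : ∀ j, (M j).rank = d)
    (a : Fin m → ℤ)
    (hsupp : interior {x : {y : Fin n → ℝ // ∑ i, y i = d} |
      (∑ j, a j * (rankPolytope (M j)).indicator (fun _ => (1 : ℤ)) (x : Fin n → ℝ))
        ≠ 0} = ∅) :
    ∀ (r : ℕ) (e : Fin n → ℤ),
      ∑ j, a j *
        (if (∀ A : Finset (Fin n), A.Nonempty →
              (∑ i ∈ A, e i) < ((r : ℤ) + 1) * (colRank (M j) A : ℤ)) ∧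
            (∑ i, e i) = ((r : ℤ) + 1) * (d : ℤ) - 1
          then (1 : ℤ) else 0) = 0 := by
  intro r e
  by_cases hm : ∑ i, e i = ((r : ℤ) + 1) * (d : ℤ) - 1
  swap
  · simp [hm]
  simp only [hm, eq_self_iff_true, and_true]
  rcases isEmpty_or_nonempty (Fin m) with hm0 | hm1
  · simp
  rcases Nat.eq_zero_or_pos n with hn0 | hn0
  · exfalso
    obtain ⟨j⟩ := hm1
    have hrk : (M j).rank ≤ n := by
      simpa using Matrix.rank_le_card_width (M j)
    rw [hM j, hn0] at hrk
    have hd0 : d = 0 := Nat.le_zero.mp hrk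
    subst hd0
    subst hn0
    simp only [Finset.univ_eq_empty, Finset.sum_empty, Nat.cast_zero, mul_zero] at hm
    omega
  -- main case
  set c : ℝ := (r : ℝ) + 1 with hc
  have hr : (0 : ℝ) < c := by positivity
  have hnR : (0 : ℝ) < (n : ℝ) := by exact_mod_cast hn0
  set x : Fin n → ℝ := fun i => ((e i : ℝ) + 1 / n) / c with hxdef
  have hes : (∑ i, (e i : ℝ)) = c * d - 1 := by
    have := congrArg (Int.cast : ℤ → ℝ) hm
    push_cast at this
    simpa [hc] using this
  have hx_A : ∀ A : Finset (Fin n),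
      ∑ i ∈ A, x i = ((∑ i ∈ A, (e i : ℝ)) + A.card / n) / c := by
    intro A
    rw [← Finset.sum_div, Finset.sum_add_distrib, Finset.sum_const, nsmul_eq_mul,
      mul_one_div]
  have hx_sum : ∑ i, x i = (d : ℝ) := by
    rw [hx_A, hes, Finset.card_univ, Fintype.card_fin]
    field_simp
    ring
  -- per-j condition
  set Cond : Fin m → Prop := fun j => ∀ A : Finset (Fin n), A.Nonempty →
      (∑ i ∈ A, e i) < ((r : ℤ) + 1) * (colRank (M j) A : ℤ) with hCond
  -- good open neighborhoods
  have hW : ∀ j, ∃ W : Set (Fin n → ℝ), IsOpen W ∧ x ∈ W ∧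
      ∀ y : Fin n → ℝ, (∑ i, y i = (d : ℝ)) → y ∈ W →
        ((rankPolytope (M j)).indicator (fun _ => (1 : ℤ)) y
          = if Cond j then 1 else 0) := by
    intro j
    by_cases hj : Cond j
    · refine ⟨{y | ∀ A : Finset (Fin n), A.Nonempty → A ≠ Finset.univ →
          ∑ i ∈ A, y i < (colRank (M j) A : ℝ)}, ?_, ?_, ?_⟩
      · have : {y : Fin n → ℝ | ∀ A : Finset (Fin n), A.Nonempty → A ≠ Finset.univ →
            ∑ i ∈ A, y i < (colRank (M j) A : ℝ)} =
            ⋂ A : Finset (Fin n), {y | A.Nonempty → A ≠ Finset.univ →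
              ∑ i ∈ A, y i < (colRank (M j) A : ℝ)} := by
          ext y; simp [Set.mem_iInter]
        rw [this]
        refine isOpen_iInter_of_finite fun A => ?_
        by_cases hA : A.Nonempty ∧ A ≠ Finset.univ
        · have : {y : Fin n → ℝ | A.Nonempty → A ≠ Finset.univ →
              ∑ i ∈ A, y i < (colRank (M j) A : ℝ)} =
              {y | ∑ i ∈ A, y i < (colRank (M j) A : ℝ)} := by
            ext y; simp [hA.1, hA.2]
          rw [this]
          exact isOpen_lt (continuous_finset_sum A fun i _ => continuous_apply i)
            continuous_const
        · have : {y : Fin n → ℝ | A.Nonempty → A ≠ Finset.univ →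
              ∑ i ∈ A, y i < (colRank (M j) A : ℝ)} = Set.univ := by
            ext y
            simp only [Set.mem_setOf_eq, Set.mem_univ, iff_true]
            intro h1 h2
            exact absurd ⟨h1, h2⟩ hA
          rw [this]
          exact isOpen_univ
      · -- x is in W
        intro A hAne hAu
        have hint : ∑ i ∈ A, e i ≤ ((r : ℤ) + 1) * (colRank (M j) A : ℤ) - 1 := by
          have := hj A hAne
          omega
        have hreal : (∑ i ∈ A, (e i : ℝ)) ≤ c * (colRank (M j) A : ℝ) - 1 := by
          have h2 : ((∑ i ∈ A, e i : ℤ) : ℝ) ≤ (((r : ℤ) + 1) * (colRank (M j) A : ℤ) - 1 : ℤ) := by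
            exact_mod_cast hint
          push_cast at h2
          simpa [hc] using h2
        have hcard : (A.card : ℝ) / n < 1 := by
          rw [div_lt_one hnR]
          have : A.card < n := by
            have hss : A ⊂ Finset.univ := (Finset.subset_univ A).ssubset_of_ne hAu
            simpa using Finset.card_lt_card hss
          exact_mod_cast this
        rw [hx_A, div_lt_iff₀ hr]
        nlinarith
      · -- indicator value
        intro y hy hyW
        rw [if_pos hj]
        exact Set.indicator_of_mem (mem_rankPolytope_of_strict (M j)
          (by rw [hM j]) y hy hyW) _
    · -- choose a violated set
      have hj2 : ∃ A : Finset (Fin n), A.Nonempty ∧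
          ((r : ℤ) + 1) * (colRank (M j) A : ℤ) ≤ ∑ i ∈ A, e i := by
        by_contra hcon
        push_neg at hcon
        exact hj fun A hA => hcon A hA
      obtain ⟨A0, hA0ne, hA0ge⟩ := hj2
      refine ⟨{y | (colRank (M j) A0 : ℝ) < ∑ i ∈ A0, y i}, ?_, ?_, ?_⟩
      · exact isOpen_lt continuous_const
          (continuous_finset_sum A0 fun i _ => continuous_apply i)
      · have hreal : c * (colRank (M j) A0 : ℝ) ≤ ∑ i ∈ A0, (e i : ℝ) := by
          have h2 : ((((r : ℤ) + 1) * (colRank (M j) A0 : ℤ) : ℤ) : ℝ)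
              ≤ ((∑ i ∈ A0, e i : ℤ) : ℝ) := by exact_mod_cast hA0ge
          push_cast at h2
          simpa [hc] using h2
        have hcard : (0 : ℝ) < (A0.card : ℝ) / n := by
          apply div_pos _ hnR
          exact_mod_cast Finset.card_pos.mpr hA0ne
        show (colRank (M j) A0 : ℝ) < ∑ i ∈ A0, x i
        rw [hx_A, lt_div_iff₀ hr]
        nlinarith
      · intro y hy hyW
        rw [if_neg hj]
        apply Set.indicator_of_notMem
        intro hmem
        have h1 : (colRank (M j) A0 : ℝ) < ∑ i ∈ A0, y i := hyW
        linarith [hmem.2.2 A0]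
  choose W hWopen hWx hWval using hW
  by_contra hne
  have hp : (⟨x, hx_sum⟩ : {y : Fin n → ℝ // ∑ i, y i = (d : ℝ)}) ∈
      interior {x : {y : Fin n → ℝ // ∑ i, y i = d} |
      (∑ j, a j * (rankPolytope (M j)).indicator (fun _ => (1 : ℤ)) (x : Fin n → ℝ))
        ≠ 0} := by
    rw [mem_interior]
    refine ⟨Subtype.val ⁻¹' (⋂ j, W j), ?_, ?_, ?_⟩
    · intro z hz
      obtain ⟨y, hy⟩ := z
      simp only [Set.mem_preimage, Set.mem_iInter] at hz
      have : ∀ j, (rankPolytope (M j)).indicator (fun _ => (1 : ℤ)) y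
          = if Cond j then 1 else 0 := fun j => hWval j y hy (hz j)
      simp only [Set.mem_setOf_eq]
      have heq : (∑ j, a j * (rankPolytope (M j)).indicator (fun _ => (1 : ℤ)) y)
          = ∑ j, a j * (if Cond j then 1 else 0) := by
        exact Finset.sum_congr rfl fun j _ => by rw [this j]
      rw [heq]
      exact hne
    · exact (isOpen_iInter_of_finite fun j => hWopen j).preimage continuous_subtype_val
    · simp only [Set.mem_preimage, Set.mem_iInter]
      exact fun j => hWx j
  rw [hsupp] at hp
  exact hp
end
end

section
/- Let R be a commutative ring and let F ∈ R[X] be a monic polynomial. In the polynomial ring R[z,a,b], let G_a and G_b be the unique polynomials satisfying (z−a)·G_a = F(z) − F(a) and (z−b)·G_b = F(z) − F(b). Then (a−b)·G_a·G_b = F(a)·G_b − F(b)·G_a + F(z)·(G_a − G_b). -/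
lemma X0_sub_X_isRegular {R : Type*} [CommRing R] (i : Fin 2) :
    IsRegular (MvPolynomial.X 0 - MvPolynomial.X i.succ : MvPolynomial (Fin 3) R) := by
  have h : MvPolynomial.finSuccEquiv R 2
      (MvPolynomial.X 0 - MvPolynomial.X i.succ : MvPolynomial (Fin 3) R) =
      Polynomial.X - Polynomial.C (MvPolynomial.X i) := by
    rw [map_sub, MvPolynomial.finSuccEquiv_X_zero, MvPolynomial.finSuccEquiv_X_succ]
  have hreg : IsRegular (Polynomial.X - Polynomial.C (MvPolynomial.X i) :
      Polynomial (MvPolynomial (Fin 2) R)) :=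
    (Polynomial.monic_X_sub_C _).isRegular
  constructor
  · intro p q hpq
    have := congrArg (MvPolynomial.finSuccEquiv R 2) hpq
    simp only [map_mul, h] at this
    exact (MvPolynomial.finSuccEquiv R 2).injective (hreg.left this)
  · intro p q hpq
    have := congrArg (MvPolynomial.finSuccEquiv R 2) hpq
    simp only [map_mul, h] at this
    exact (MvPolynomial.finSuccEquiv R 2).injective (hreg.right this)

/-- The partial fraction identity for divided differences: in `R[z,a,b]`, if
`(z−a)·G_a = F(z) − F(a)` and `(z−b)·G_b = F(z) − F(b)` for a monic `F ∈ R[X]`, then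
`(a−b)·G_a·G_b = F(a)·G_b − F(b)·G_a + F(z)·(G_a − G_b)`. -/
theorem partial_fraction_divided_difference {R : Type*} [CommRing R]
    (F : Polynomial R) (hF : F.Monic)
    (Ga Gb : MvPolynomial (Fin 3) R)
    (hGa : (MvPolynomial.X 0 - MvPolynomial.X 1) * Ga =
      Polynomial.aeval (MvPolynomial.X 0 : MvPolynomial (Fin 3) R) F -
        Polynomial.aeval (MvPolynomial.X 1 : MvPolynomial (Fin 3) R) F)
    (hGb : (MvPolynomial.X 0 - MvPolynomial.X 2) * Gb =
      Polynomial.aeval (MvPolynomial.X 0 : MvPolynomial (Fin 3) R) F -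
        Polynomial.aeval (MvPolynomial.X 2 : MvPolynomial (Fin 3) R) F) :
    (MvPolynomial.X 1 - MvPolynomial.X 2) * Ga * Gb =
      Polynomial.aeval (MvPolynomial.X 1 : MvPolynomial (Fin 3) R) F * Gb -
        Polynomial.aeval (MvPolynomial.X 2 : MvPolynomial (Fin 3) R) F * Ga +
        Polynomial.aeval (MvPolynomial.X 0 : MvPolynomial (Fin 3) R) F * (Ga - Gb) := by
  set z : MvPolynomial (Fin 3) R := MvPolynomial.X 0
  set a : MvPolynomial (Fin 3) R := MvPolynomial.X 1
  set b : MvPolynomial (Fin 3) R := MvPolynomial.X 2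
  set Fz := Polynomial.aeval z F
  set Fa := Polynomial.aeval a F
  set Fb := Polynomial.aeval b F
  have ha : IsRegular (z - a) := X0_sub_X_isRegular (R := R) 0
  have hb : IsRegular (z - b) := X0_sub_X_isRegular (R := R) 1
  apply (ha.mul hb).left
  show (z - a) * (z - b) * ((a - b) * Ga * Gb) =
    (z - a) * (z - b) * (Fa * Gb - Fb * Ga + Fz * (Ga - Gb))
  linear_combination
    ((z - b) * ((a - b) * Gb + Fb - Fz)) * hGa + ((z - b) * (Fz - Fa)) * hGb
end
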